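/- arXiv:2603.21602 — 6 statements merged into one kernel-verified Lean document; each statement's English description precedes it below -/
import Mathlib

section
/- There is an absolute constant C > 0 such that for every R > 0, every measurable g : (0,∞) → ℝ with ∫_0^∞ g(s)² s² ds < ∞ and g(s) = 0 for almost every s < R, and all real numbers 0 ≤ r₁ < r₂ ≤ R, the function v defined on {(x,t) : |x| > |t|} by v(x,t) = (2|x|)^(−1) ∫_{|x|−t}^{|x|+t} s·g(s) ds (oriented integral) satisfies ‖χ_{Ω_{r₁,r₂}} v‖_Y ≤ C · ((r₂ − r₁)/R)^(1/10) · (4π ∫_0^∞ g(s)² s² ds)^(1/2). -/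
open MeasureTheory Real Set

noncomputable section

/-- The ground state `W(x) = (1/3 + |x|^2)^(-1/2)` on `ℝ³`. -/
def W3 (x : EuclideanSpace ℝ (Fin 3)) : ℝ := (1/3 + ‖x‖^2) ^ (-(1:ℝ)/2)

/-- The rescaled ground state `W_λ(x) = λ^(-1/2) W(x/λ)`. -/
def Wlam (lam : ℝ) (x : EuclideanSpace ℝ (Fin 3)) : ℝ := lam ^ (-(1:ℝ)/2) * W3 (lam⁻¹ • x)

/-- The Strichartz norm `‖χ_Ψ u‖_Y = (∫ (∫_{(x,t)∈Ψ} |u|^10 dx)^(1/2) dt)^(1/5)`. -/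
def Ynorm (Ψ : Set (EuclideanSpace ℝ (Fin 3) × ℝ))
    (u : EuclideanSpace ℝ (Fin 3) → ℝ → ℝ) : ℝ :=
  (∫ t : ℝ, (∫ x in {x | (x, t) ∈ Ψ}, |u x t| ^ 10) ^ ((1:ℝ)/2)) ^ ((1:ℝ)/5)

/-- The norm `‖χ_Ψ u‖_{L¹L²} = ∫ (∫_{(x,t)∈Ψ} |u|² dx)^(1/2) dt`. -/
def L1L2 (Ψ : Set (EuclideanSpace ℝ (Fin 3) × ℝ))
    (u : EuclideanSpace ℝ (Fin 3) → ℝ → ℝ) : ℝ :=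
  ∫ t : ℝ, (∫ x in {x | (x, t) ∈ Ψ}, (u x t) ^ 2) ^ ((1:ℝ)/2)

/-- The channel region `Ω_{r₁,r₂} = {(x,t) : |t| + r₁ < |x| < |t| + r₂}`. -/
def channel (r₁ r₂ : ℝ) : Set (EuclideanSpace ℝ (Fin 3) × ℝ) :=
  {p | |p.2| + r₁ < ‖p.1‖ ∧ ‖p.1‖ < |p.2| + r₂}

/-- The radial free wave with radiation profile `G` (in the negative time direction):
`v(x,t) = |x|⁻¹ ∫_{t-|x|}^{t+|x|} G(s) ds`. -/
def freeWave (G : ℝ → ℝ) (x : EuclideanSpace ℝ (Fin 3)) (t : ℝ) : ℝ :=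
  ‖x‖⁻¹ * ∫ s in (t - ‖x‖)..(t + ‖x‖), G s

/-- `‖G‖_{L²(E)} = (∫_E |G|²)^(1/2)`. -/
def L2on (G : ℝ → ℝ) (E : Set ℝ) : ℝ := (∫ s in E, (G s)^2) ^ ((1:ℝ)/2)

/-- The set whose supremum is `sup_{0<r<λ} (λ/r) ∫_{-r}^r |G(s)|² ds`. -/
def tauA (G : ℝ → ℝ) (lam : ℝ) : Set ℝ :=
  {A | ∃ r, 0 < r ∧ r < lam ∧ A = (lam / r) * ∫ s in (-r)..r, (G s)^2}

/-- The set whose supremum is `sup_{r>0} r^(-1/2) ∫_{-r}^r |G(s)| ds`. -/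
def tauB (G : ℝ → ℝ) : Set ℝ :=
  {B | ∃ r, 0 < r ∧ B = (∫ s in (-r)..r, |G s|) / Real.sqrt r}

/-- `τ = (sup_{0<r<λ} (λ/r)∫_{-r}^r |G|²)^(1/2) + sup_{r>0} r^(-1/2)∫_{-r}^r |G|`. -/
def tau (G : ℝ → ℝ) (lam : ℝ) : ℝ := Real.sqrt (sSup (tauA G lam)) + sSup (tauB G)


lemma cs_bound (g : ℝ → ℝ) (hg : Measurable g)
    (hint : IntegrableOn (fun s => (g s)^2 * s^2) (Set.Ioi (0:ℝ)))
    {c b : ℝ} (hc : 0 ≤ c) :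
    |∫ s in Set.Ioc c b, s * g s| ≤
      Real.sqrt (∫ s in Set.Ioi (0:ℝ), (g s)^2 * s^2) * Real.sqrt (b - c) := by
  rcases le_or_gt b c with h | h
  · rw [Set.Ioc_eq_empty (fun hlt => absurd h (not_le.2 hlt))]
    simp
    positivity
  · set T : Set ℝ := Set.Ioc c b with hT
    have hTsub : T ⊆ Set.Ioi (0:ℝ) := fun s hs => lt_of_le_of_lt hc hs.1
    have hTmeas : MeasurableSet T := measurableSet_Ioc
    have hTfin : volume T < ⊤ := by simp [hT]
    haveI : IsFiniteMeasure (volume.restrict T) :=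
      ⟨by rwa [Measure.restrict_apply_univ]⟩
    have hintT : IntegrableOn (fun s => (g s)^2 * s^2) T volume := hint.mono_set hTsub
    have habs : |∫ s in T, s * g s| ≤ ∫ s in T, |s * g s| := by
      rw [← Real.norm_eq_abs]
      exact (norm_integral_le_integral_norm _).trans (le_of_eq (by simp [Real.norm_eq_abs, abs_mul]))
    have hconj : Real.HolderConjugate 2 2 := Real.HolderConjugate.two_two
    have hmemf : MemLp (fun s => |s * g s|) (ENNReal.ofReal 2) (volume.restrict T) := by
      rw [show ENNReal.ofReal 2 = 2 by norm_num]
      rw [memLp_two_iff_integrable_sq]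
      · refine hintT.congr_fun (fun s hs => ?_) hTmeas
        rw [sq_abs]; ring
      · exact ((measurable_id.mul hg).abs).aestronglyMeasurable
    have hmem1 : MemLp (fun _ : ℝ => (1:ℝ)) (ENNReal.ofReal 2) (volume.restrict T) :=
      memLp_const 1
    have hold : ∫ s in T, |s * g s| ≤
        (∫ s in T, |s * g s| ^ (2:ℝ)) ^ ((1:ℝ)/2) * (∫ s in T, (1:ℝ) ^ (2:ℝ)) ^ ((1:ℝ)/2) := by
      have := integral_mul_le_Lp_mul_Lq_of_nonneg hconj
        (Filter.Eventually.of_forall (fun s => abs_nonneg _))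
        (Filter.Eventually.of_forall (fun _ => zero_le_one)) hmemf hmem1
      simpa using this
    have h2 : ∫ s in T, |s * g s| ^ (2:ℝ) = ∫ s in T, (g s)^2 * s^2 := by
      refine setIntegral_congr_fun hTmeas (fun s hs => ?_)
      rw [show ((2:ℝ) : ℝ) = ((2:ℕ) : ℝ) by norm_num, Real.rpow_natCast, sq_abs]
      ring
    have h3 : ∫ s in T, (g s)^2 * s^2 ≤ ∫ s in Set.Ioi (0:ℝ), (g s)^2 * s^2 := by
      refine setIntegral_mono_set hint ?_ (HasSubset.Subset.eventuallyLE hTsub)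
      exact Filter.Eventually.of_forall (fun s => by positivity)
    have h4 : ∫ s in T, (1:ℝ) ^ (2:ℝ) = b - c := by
      simp [hT, Real.volume_Ioc, ENNReal.toReal_ofReal (le_of_lt (sub_pos.2 h)), h.le]
    calc |∫ s in T, s * g s| ≤ ∫ s in T, |s * g s| := habs
      _ ≤ (∫ s in T, |s * g s| ^ (2:ℝ)) ^ ((1:ℝ)/2) * (∫ s in T, (1:ℝ) ^ (2:ℝ)) ^ ((1:ℝ)/2) := hold
      _ ≤ Real.sqrt (∫ s in Set.Ioi (0:ℝ), (g s)^2 * s^2) * Real.sqrt (b - c) := by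
          rw [h2, h4, Real.sqrt_eq_rpow, Real.sqrt_eq_rpow]
          have h0 : (0:ℝ) ≤ ∫ s in T, (g s)^2 * s^2 :=
            setIntegral_nonneg hTmeas (fun s _ => by positivity)
          have h5 : (0:ℝ) ≤ (b - c) ^ ((1:ℝ)/2) := Real.rpow_nonneg (by linarith) _
          exact mul_le_mul (Real.rpow_le_rpow h0 h3 (by norm_num)) le_rfl h5
            (Real.rpow_nonneg (le_trans h0 h3) _)


lemma ae_ne_real (R : ℝ) : ∀ᵐ s : ℝ, s ≠ R := by
  rw [ae_iff]
  simpa [Classical.not_not] using (Real.volume_singleton : volume ({R} : Set ℝ) = 0)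

lemma vanish_integral (g : ℝ → ℝ) (R : ℝ) (hg0 : ∀ᵐ s : ℝ, 0 < s → s < R → g s = 0)
    {a b : ℝ} (ha : 0 < a) (hb : b ≤ R) :
    ∫ s in Set.Ioc a b, s * g s = 0 := by
  have h : ∀ᵐ s ∂(volume.restrict (Set.Ioc a b)), s * g s = 0 := by
    rw [ae_restrict_iff' measurableSet_Ioc]
    filter_upwards [hg0, ae_ne_real R] with s h1 h2 hs
    have hgs : g s = 0 := h1 (lt_trans ha hs.1) (lt_of_le_of_ne (hs.2.trans hb) h2)
    rw [hgs, mul_zero]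
  exact integral_eq_zero_of_ae h

lemma interval_abs (g : ℝ → ℝ) (ρ t : ℝ) :
    |∫ s in (ρ - t)..(ρ + t), s * g s| = |∫ s in Set.Ioc (ρ - |t|) (ρ + |t|), s * g s| := by
  rcases le_or_gt 0 t with ht | ht
  · rw [abs_of_nonneg ht, intervalIntegral.integral_of_le (by linarith)]
  · rw [abs_of_neg ht, intervalIntegral.integral_symm, abs_neg,
      intervalIntegral.integral_of_le (by linarith)]
    congr 2 <;> ring

def c0 : ℝ := (volume (Metric.ball (0:EuclideanSpace ℝ (Fin 3)) 1)).toReal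

def c1 : ℝ := 13 * c0 * 3^8 / 32 + 1

lemma c0_nonneg : 0 ≤ c0 := ENNReal.toReal_nonneg

lemma c1_one : 1 ≤ c1 := by
  have := c0_nonneg
  unfold c1; nlinarith







set_option maxHeartbeats 2000000 in
lemma key_bound (g : ℝ → ℝ) (R r₁ r₂ : ℝ) (hg : Measurable g)
    (hint : IntegrableOn (fun s => (g s)^2 * s^2) (Set.Ioi (0:ℝ)))
    (hR : 0 < R) (hg0 : ∀ᵐ s : ℝ, 0 < s → s < R → g s = 0)
    (hr1 : 0 ≤ r₁) (hr12 : r₁ < r₂) (hr2R : r₂ ≤ R) (t : ℝ) :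
    (∫ x in {x : EuclideanSpace ℝ (Fin 3) | (x,t) ∈ channel r₁ r₂},
        |(2*‖x‖)⁻¹ * ∫ s in (‖x‖-t)..(‖x‖+t), s * g s| ^ 10)
      ≤ c1 * (∫ s in Set.Ioi (0:ℝ), (g s)^2 * s^2)^5 * (r₂-r₁) * (((R+|t|)^3)⁻¹) := by
  set E := ∫ s in Set.Ioi (0:ℝ), (g s)^2 * s^2 with hE
  have hE0 : 0 ≤ E := setIntegral_nonneg measurableSet_Ioi (fun s _ => by positivity)
  set τ := |t| with hτ
  have hτ0 : 0 ≤ τ := abs_nonneg t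
  set α := max (τ + r₁) (R - τ) with hα
  set β := τ + r₂ with hβ
  have hm1 : τ + r₁ ≤ α := le_max_left _ _
  have hm2 : R - τ ≤ α := le_max_right _ _
  have h3α : R + τ ≤ 3 * α := by linarith
  have hα0 : 0 < α := by nlinarith
  have hRτ : 0 < R + τ := by linarith
  have hβα : β - α ≤ r₂ - r₁ := by simp only [hβ]; linarith
  have hβ3α : β ≤ 3 * α := by simp only [hβ]; linarith
  set Kc := E^5 * (2*τ)^5 / 2^10 with hKc
  have hKc0 : 0 ≤ Kc := by positivity
  set A := {x : EuclideanSpace ℝ (Fin 3) | α < ‖x‖ ∧ ‖x‖ < β} with hA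
  have hAmeas : MeasurableSet A := by
    rw [hA, Set.setOf_and]
    exact (measurableSet_lt measurable_const measurable_norm).inter
      (measurableSet_lt measurable_norm measurable_const)
  set f : EuclideanSpace ℝ (Fin 3) → ℝ := fun x => Kc * (‖x‖^10)⁻¹ with hf
  set B := A.indicator f with hB
  have hf0 : ∀ x, 0 ≤ f x := fun x => by rw [hf]; positivity
  have hB0 : ∀ x, 0 ≤ B x := fun x => Set.indicator_nonneg (fun y _ => hf0 y) x
  set slice := {x : EuclideanSpace ℝ (Fin 3) | (x,t) ∈ channel r₁ r₂} with hslice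
  have hslicemeas : MeasurableSet slice := by
    have : slice = {x : EuclideanSpace ℝ (Fin 3) | τ + r₁ < ‖x‖} ∩ {x | ‖x‖ < τ + r₂} := by
      ext x; simp [hslice, channel, Set.mem_setOf_eq, hτ]
    rw [this]
    exact (measurableSet_lt measurable_const measurable_norm).inter
      (measurableSet_lt measurable_norm measurable_const)
  -- pointwise bound
  have hpt : ∀ x ∈ slice, |(2*‖x‖)⁻¹ * ∫ s in (‖x‖-t)..(‖x‖+t), s * g s| ^ 10 ≤ B x := by
    intro x hx
    have hx' : τ + r₁ < ‖x‖ ∧ ‖x‖ < τ + r₂ := hx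
    obtain ⟨hx1, hx2⟩ := hx'
    have hρ0 : 0 < ‖x‖ := lt_of_le_of_lt (by linarith) hx1
    have habs : |(2*‖x‖)⁻¹ * ∫ s in (‖x‖-t)..(‖x‖+t), s * g s|
        = (2*‖x‖)⁻¹ * |∫ s in Set.Ioc (‖x‖ - τ) (‖x‖ + τ), s * g s| := by
      rw [abs_mul, abs_inv, abs_of_pos (by positivity : (0:ℝ) < 2*‖x‖), interval_abs g ‖x‖ t]
    by_cases hcase : ‖x‖ + τ ≤ R
    · rw [habs, vanish_integral g R hg0 (by linarith : (0:ℝ) < ‖x‖ - τ) hcase]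
      simpa using hB0 x
    · push_neg at hcase
      have hxA : x ∈ A := ⟨max_lt hx1 (by linarith), hx2⟩
      rw [hB, Set.indicator_of_mem hxA, hf]
      have hcs := cs_bound g hg hint (c := ‖x‖ - τ) (b := ‖x‖ + τ) (by linarith)
      rw [show ‖x‖ + τ - (‖x‖ - τ) = 2*τ by ring] at hcs
      have hvle : |(2*‖x‖)⁻¹ * ∫ s in (‖x‖-t)..(‖x‖+t), s * g s|
          ≤ (2*‖x‖)⁻¹ * (Real.sqrt E * Real.sqrt (2*τ)) := by
        rw [habs]
        exact mul_le_mul_of_nonneg_left hcs (by positivity)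
      calc |(2*‖x‖)⁻¹ * ∫ s in (‖x‖-t)..(‖x‖+t), s * g s| ^ 10
          ≤ ((2*‖x‖)⁻¹ * (Real.sqrt E * Real.sqrt (2*τ)))^10 :=
            pow_le_pow_left₀ (abs_nonneg _) hvle 10
        _ = Kc * (‖x‖^10)⁻¹ := by
            rw [hKc, mul_pow, mul_pow,
              show Real.sqrt E ^ 10 = ((Real.sqrt E)^2)^5 by ring,
              show Real.sqrt (2*τ) ^ 10 = ((Real.sqrt (2*τ))^2)^5 by ring,
              Real.sq_sqrt hE0, Real.sq_sqrt (by positivity : (0:ℝ) ≤ 2*τ)]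
            have h2 : (‖x‖ : ℝ) ≠ 0 := ne_of_gt hρ0
            field_simp
  -- integrability of B
  have hAfin : volume A ≠ ⊤ := by
    refine ne_top_of_le_ne_top (measure_ball_lt_top (x := (0:EuclideanSpace ℝ (Fin 3))) (r := β)).ne
      (measure_mono ?_)
    intro x hx
    exact mem_ball_zero_iff.2 hx.2
  have hfmeas : Measurable f := ((measurable_norm.pow_const 10).inv).const_mul Kc
  have hfint : IntegrableOn f A := by
    refine Measure.integrableOn_of_bounded (M := Kc * (α^10)⁻¹) hAfin hfmeas.aestronglyMeasurable ?_
    refine ae_restrict_of_forall_mem hAmeas (fun x hx => ?_)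
    rw [Real.norm_eq_abs, abs_of_nonneg (hf0 x), hf]
    have hαx : α ≤ ‖x‖ := le_of_lt hx.1
    have hinv : (‖x‖^10)⁻¹ ≤ (α^10)⁻¹ :=
      inv_anti₀ (by positivity) (pow_le_pow_left₀ hα0.le hαx 10)
    exact mul_le_mul_of_nonneg_left hinv hKc0
  have hBint : Integrable B := (integrable_indicator_iff hAmeas).2 hfint
  have step1 : (∫ x in slice, |(2*‖x‖)⁻¹ * ∫ s in (‖x‖-t)..(‖x‖+t), s * g s| ^ 10)
      ≤ ∫ x in slice, B x :=
    integral_mono_of_nonneg (Filter.Eventually.of_forall (fun x => pow_nonneg (abs_nonneg _) 10))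
      hBint.integrableOn (ae_restrict_of_forall_mem hslicemeas hpt)
  have step2 : ∫ x in slice, B x ≤ ∫ x, B x :=
    setIntegral_le_integral hBint (Filter.Eventually.of_forall hB0)
  have step3 : ∫ x, B x = ∫ x in A, f x := by
    rw [hB, integral_indicator hAmeas]
  have step4 : ∫ x in A, f x ≤ (Kc * (α^10)⁻¹) * (volume A).toReal := by
    refine le_trans (le_abs_self _) ?_
    rw [← Real.norm_eq_abs]
    refine norm_setIntegral_le_of_norm_le_const (lt_top_iff_ne_top.2 hAfin) (fun x hx => ?_)
    rw [Real.norm_eq_abs, abs_of_nonneg (hf0 x), hf]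
    have hαx : α ≤ ‖x‖ := le_of_lt hx.1
    have hinv : (‖x‖^10)⁻¹ ≤ (α^10)⁻¹ :=
      inv_anti₀ (by positivity) (pow_le_pow_left₀ hα0.le hαx 10)
    exact mul_le_mul_of_nonneg_left hinv hKc0
  have step5 : (volume A).toReal ≤ 13 * (r₂ - r₁) * α^2 * c0 := by
    rcases le_or_gt β α with hle | hαβ
    · have : A = ∅ := by
        ext x; simp only [hA, Set.mem_setOf_eq, Set.mem_empty_iff_false, iff_false, not_and]
        intro h1; linarith
      rw [this]
      simp only [measure_empty, ENNReal.toReal_zero]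
      apply mul_nonneg (mul_nonneg (mul_nonneg (by norm_num) (by linarith)) (sq_nonneg α)) c0_nonneg
    · have hβ0 : 0 < β := lt_trans hα0 hαβ
      have hsub : A ⊆ Metric.ball 0 β \ Metric.closedBall 0 α := by
        intro x hx
        exact ⟨mem_ball_zero_iff.2 hx.2, fun hc => absurd (mem_closedBall_zero_iff.1 hc)
          (not_le.2 hx.1)⟩
      have hdiff : volume (Metric.ball (0:EuclideanSpace ℝ (Fin 3)) β \ Metric.closedBall 0 α)
          = volume (Metric.ball (0:EuclideanSpace ℝ (Fin 3)) β)
            - volume (Metric.closedBall (0:EuclideanSpace ℝ (Fin 3)) α) :=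
        measure_diff (Metric.closedBall_subset_ball hαβ)
          measurableSet_closedBall.nullMeasurableSet measure_closedBall_lt_top.ne
      have hballβ : (volume (Metric.ball (0:EuclideanSpace ℝ (Fin 3)) β)).toReal = β^3 * c0 := by
        rw [Measure.addHaar_ball _ _ hβ0.le, finrank_euclideanSpace_fin, ENNReal.toReal_mul,
          ENNReal.toReal_ofReal (by positivity)]
        rfl
      have hballα : (volume (Metric.closedBall (0:EuclideanSpace ℝ (Fin 3)) α)).toReal
          = α^3 * c0 := by
        rw [Measure.addHaar_closedBall _ _ hα0.le, finrank_euclideanSpace_fin, ENNReal.toReal_mul,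
          ENNReal.toReal_ofReal (by positivity)]
        rfl
      have hmono := measure_mono (μ := volume) hsub
      rw [hdiff] at hmono
      have htoReal : (volume A).toReal ≤ β^3 * c0 - α^3 * c0 := by
        rw [← hballβ, ← hballα, ← ENNReal.toReal_sub_of_le
          (measure_mono (Metric.closedBall_subset_ball hαβ)) measure_ball_lt_top.ne]
        exact ENNReal.toReal_mono (by
          exact (tsub_le_self.trans_lt measure_ball_lt_top).ne) hmono
      refine htoReal.trans ?_
      have hfact : β^3 * c0 - α^3 * c0 = (β - α) * (β^2 + α*β + α^2) * c0 := by ring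
      rw [hfact]
      have h1 : β^2 + α*β + α^2 ≤ 13 * α^2 := by nlinarith
      have h2 : 0 ≤ β - α := by linarith
      have h3 : (β - α) * (β^2 + α*β + α^2) ≤ (r₂ - r₁) * (13 * α^2) := by
        exact mul_le_mul hβα h1
          (add_nonneg (add_nonneg (sq_nonneg β) (mul_nonneg hα0.le hβ0.le)) (sq_nonneg α))
          (by linarith)
      calc (β - α) * (β^2 + α*β + α^2) * c0 ≤ (r₂ - r₁) * (13 * α^2) * c0 :=
          mul_le_mul_of_nonneg_right h3 c0_nonneg
        _ = 13 * (r₂ - r₁) * α^2 * c0 := by ring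
  -- assemble
  have hchain : (∫ x in slice, |(2*‖x‖)⁻¹ * ∫ s in (‖x‖-t)..(‖x‖+t), s * g s| ^ 10)
      ≤ (Kc * (α^10)⁻¹) * (13 * (r₂ - r₁) * α^2 * c0) := by
    refine le_trans step1 (le_trans step2 ?_)
    rw [step3]
    refine le_trans step4 ?_
    apply mul_le_mul_of_nonneg_left step5 (by positivity)
  refine hchain.trans ?_
  have e1 : (Kc * (α^10)⁻¹) * (13 * (r₂ - r₁) * α^2 * c0)
      = 13 * c0 * Kc * (r₂ - r₁) * (α^8)⁻¹ := by
    have hcancel : α^2 * (α^2)⁻¹ = 1 := mul_inv_cancel₀ (pow_ne_zero 2 (ne_of_gt hα0))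
    linear_combination (13 * Kc * (r₂ - r₁) * c0 * (α^8)⁻¹) * hcancel
  rw [e1]
  have hKle : Kc ≤ E^5 * (R+τ)^5 / 32 := by
    rw [hKc]
    have h5 : τ^5 ≤ (R+τ)^5 := pow_le_pow_left₀ hτ0 (by linarith) 5
    have hE5 : 0 ≤ E^5 := pow_nonneg hE0 5
    have hmul : E^5 * τ^5 ≤ E^5 * (R+τ)^5 := mul_le_mul_of_nonneg_left h5 hE5
    calc E^5 * (2*τ)^5 / 2^10 = E^5 * τ^5 / 32 := by ring
      _ ≤ E^5 * (R+τ)^5 / 32 := by linarith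
  have hαinv : (α^8)⁻¹ ≤ 3^8 * ((R+τ)^8)⁻¹ := by
    have h8 : (R+τ)^8 ≤ 3^8 * α^8 := by
      calc (R+τ)^8 ≤ (3*α)^8 := pow_le_pow_left₀ hRτ.le h3α 8
        _ = 3^8 * α^8 := by ring
    rw [inv_le_iff_one_le_mul₀ (by positivity)]
    calc (1:ℝ) = (R+τ)^8 * ((R+τ)^8)⁻¹ := by field_simp
      _ ≤ 3^8 * α^8 * ((R+τ)^8)⁻¹ := by gcongr
      _ = 3^8 * ((R+τ)^8)⁻¹ * α^8 := by ring
  calc 13 * c0 * Kc * (r₂ - r₁) * (α^8)⁻¹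
      ≤ 13 * c0 * (E^5 * (R+τ)^5 / 32) * (r₂ - r₁) * (3^8 * ((R+τ)^8)⁻¹) := by
        apply mul_le_mul
        · apply mul_le_mul_of_nonneg_right (by
            apply mul_le_mul_of_nonneg_left hKle (mul_nonneg (by norm_num) c0_nonneg)) (by linarith)
        · exact hαinv
        · positivity
        · exact mul_nonneg (mul_nonneg (mul_nonneg (by norm_num) c0_nonneg) (by positivity)) (by linarith)
    _ = (13 * c0 * 3^8 / 32) * E^5 * (r₂ - r₁) * ((R+τ)^5 * ((R+τ)^8)⁻¹) := by ring
    _ = (13 * c0 * 3^8 / 32) * E^5 * (r₂ - r₁) * (((R+τ)^3)⁻¹) := by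
        congr 1
        rw [show (R+τ)^8 = (R+τ)^5*(R+τ)^3 by ring, mul_inv, ← mul_assoc,
          mul_inv_cancel₀ (pow_ne_zero 5 (ne_of_gt hRτ)), one_mul]
    _ ≤ c1 * E^5 * (r₂ - r₁) * (((R+τ)^3)⁻¹) := by
        have h13 : (13 * c0 * 3^8 / 32 : ℝ) ≤ c1 := by unfold c1; linarith
        apply mul_le_mul_of_nonneg_right ?_ (by positivity)
        apply mul_le_mul_of_nonneg_right ?_ (by linarith)
        exact mul_le_mul_of_nonneg_right h13 (by positivity)


lemma f0_eq (R : ℝ) (hR : 0 < R) :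
    Set.EqOn (fun u : ℝ => Real.sqrt ((u^3)⁻¹)) (fun u : ℝ => u ^ (-(3:ℝ)/2)) (Set.Ioi R) := by
  intro u hu
  have hu0 : 0 < u := lt_trans hR hu
  simp only
  rw [← Real.rpow_natCast u 3, ← Real.rpow_neg hu0.le, Real.sqrt_eq_rpow, ← Real.rpow_mul hu0.le]
  norm_num

lemma int_f0 (R : ℝ) (hR : 0 < R) :
    IntegrableOn (fun u : ℝ => Real.sqrt ((u^3)⁻¹)) (Set.Ioi R) := by
  exact (integrableOn_Ioi_rpow_of_lt (by norm_num : (-(3:ℝ)/2) < -1) hR).congr_fun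
    (fun u hu => ((f0_eq R hR) hu).symm) measurableSet_Ioi

lemma intval_f0 (R : ℝ) (hR : 0 < R) :
    ∫ u in Set.Ioi R, Real.sqrt ((u^3)⁻¹) = 2 * R ^ (-(1:ℝ)/2) := by
  rw [setIntegral_congr_fun measurableSet_Ioi (f0_eq R hR),
    integral_Ioi_rpow_of_lt (by norm_num : (-(3:ℝ)/2) < -1) hR]
  rw [show (-(3:ℝ)/2 + 1) = -(1:ℝ)/2 by norm_num]
  ring

lemma indicator_shift (R : ℝ) (f₀ : ℝ → ℝ) :
    (fun t : ℝ => (Set.Ioi R).indicator f₀ (R + t)) = (Set.Ioi (0:ℝ)).indicator (fun t => f₀ (R + t)) := by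
  ext t
  by_cases ht : 0 < t
  · rw [Set.indicator_of_mem (Set.mem_Ioi.2 (by linarith : R < R + t)) f₀,
      Set.indicator_of_mem (Set.mem_Ioi.2 ht) (fun t => f₀ (R + t))]
  · rw [Set.indicator_of_notMem (fun hc => ht (by simpa using Set.mem_Ioi.1 hc)) f₀,
      Set.indicator_of_notMem (fun hc => ht (Set.mem_Ioi.1 hc)) (fun t => f₀ (R + t))]

lemma int_shift (R : ℝ) (hR : 0 < R) :
    IntegrableOn (fun t : ℝ => Real.sqrt (((R + t)^3)⁻¹)) (Set.Ioi (0:ℝ)) := by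
  set f₀ : ℝ → ℝ := fun u => Real.sqrt ((u^3)⁻¹) with hf₀
  have h1 : Integrable ((Set.Ioi R).indicator f₀) :=
    (integrable_indicator_iff measurableSet_Ioi).2 (int_f0 R hR)
  have h2 : Integrable (fun t => (Set.Ioi R).indicator f₀ (R + t)) := h1.comp_add_left R
  rw [indicator_shift R f₀] at h2
  exact (integrable_indicator_iff measurableSet_Ioi).1 h2

lemma intval_shift (R : ℝ) (hR : 0 < R) :
    ∫ t in Set.Ioi (0:ℝ), Real.sqrt (((R + t)^3)⁻¹) = 2 * R ^ (-(1:ℝ)/2) := by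
  set f₀ : ℝ → ℝ := fun u => Real.sqrt ((u^3)⁻¹) with hf₀
  have : ∫ t in Set.Ioi (0:ℝ), f₀ (R + t) = ∫ t, (Set.Ioi (0:ℝ)).indicator (fun t => f₀ (R + t)) t := by
    rw [integral_indicator measurableSet_Ioi]
  rw [this, ← indicator_shift R f₀, integral_add_left_eq_self ((Set.Ioi R).indicator f₀) R,
    integral_indicator measurableSet_Ioi]
  exact intval_f0 R hR

lemma integrable_J (R : ℝ) (hR : 0 < R) :
    Integrable (fun t : ℝ => Real.sqrt (((R + |t|)^3)⁻¹)) := by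
  have hIoi : IntegrableOn (fun t : ℝ => Real.sqrt (((R + |t|)^3)⁻¹)) (Set.Ioi (0:ℝ)) := by
    refine (int_shift R hR).congr_fun (fun t ht => ?_) measurableSet_Ioi
    rw [abs_of_pos ht]
  have hIci : IntegrableOn (fun t : ℝ => Real.sqrt (((R + |t|)^3)⁻¹)) (Set.Ici (0:ℝ)) :=
    Iff.mpr integrableOn_Ici_iff_integrableOn_Ioi hIoi
  have hIic : IntegrableOn (fun t : ℝ => Real.sqrt (((R + |t|)^3)⁻¹)) (Set.Iic (0:ℝ)) := by
    rw [show (volume : Measure ℝ) = Measure.map Neg.neg volume from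
      (Measure.map_neg_eq_self (volume : Measure ℝ)).symm]
    have m : MeasurableEmbedding fun x : ℝ => -x := (Homeomorph.neg ℝ).measurableEmbedding
    rw [m.integrableOn_map_iff]
    simp_rw [Function.comp_def, abs_neg, neg_preimage, neg_Iic, neg_zero]
    exact hIci
  have := hIic.union hIoi
  rwa [Set.Iic_union_Ioi, integrableOn_univ] at this

lemma intval_J (R : ℝ) (hR : 0 < R) :
    ∫ t : ℝ, Real.sqrt (((R + |t|)^3)⁻¹) = 4 * R ^ (-(1:ℝ)/2) := by
  have h := integral_comp_abs (f := fun u : ℝ => Real.sqrt (((R + u)^3)⁻¹))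
  rw [h, intval_shift R hR]
  ring

theorem stmt9 :
    ∃ C : ℝ, 0 < C ∧ ∀ (g : ℝ → ℝ) (R r₁ r₂ : ℝ),
      Measurable g →
      IntegrableOn (fun s => (g s)^2 * s^2) (Set.Ioi (0:ℝ)) →
      0 < R → (∀ᵐ s : ℝ, 0 < s → s < R → g s = 0) →
      0 ≤ r₁ → r₁ < r₂ → r₂ ≤ R →
      Ynorm (channel r₁ r₂)
          (fun x t => (2 * ‖x‖)⁻¹ * ∫ s in (‖x‖ - t)..(‖x‖ + t), s * g s)
        ≤ C * ((r₂ - r₁) / R) ^ ((1:ℝ)/10) *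
            Real.sqrt (4 * π * ∫ s in Set.Ioi (0:ℝ), (g s)^2 * s^2) := by
  have hc1 : (1:ℝ) ≤ c1 := c1_one
  have hsc1 : 1 ≤ Real.sqrt c1 := by
    rw [show (1:ℝ) = Real.sqrt 1 by simp]
    exact Real.sqrt_le_sqrt hc1
  have hCbase : (0:ℝ) < 4 * Real.sqrt c1 := by nlinarith
  refine ⟨(4 * Real.sqrt c1) ^ ((1:ℝ)/5), Real.rpow_pos_of_pos hCbase _, ?_⟩
  intro g R r₁ r₂ hg hint hR hg0 hr1 hr12 hr2R
  have hE0 : 0 ≤ ∫ s in Set.Ioi (0:ℝ), (g s)^2 * s^2 :=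
    setIntegral_nonneg measurableSet_Ioi (fun s _ => by positivity)
  set E := ∫ s in Set.Ioi (0:ℝ), (g s)^2 * s^2 with hE
  clear_value E
  have key := fun t => key_bound g R r₁ r₂ hg hint hR hg0 hr1 hr12 hr2R t
  rw [← hE] at key
  set D := Real.sqrt (c1 * E^5 * (r₂ - r₁)) with hD
  have hprod0 : 0 ≤ c1 * E^5 * (r₂ - r₁) := by
    apply mul_nonneg (mul_nonneg (by linarith) (by positivity)) (by linarith)
  have hD0 : 0 ≤ D := Real.sqrt_nonneg _
  have hF0 : ∀ t : ℝ, (0:ℝ) ≤ (∫ x in {x : EuclideanSpace ℝ (Fin 3) | (x,t) ∈ channel r₁ r₂},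
      |(2*‖x‖)⁻¹ * ∫ s in (‖x‖-t)..(‖x‖+t), s * g s| ^ 10) ^ ((1:ℝ)/2) :=
    fun t => Real.rpow_nonneg (integral_nonneg (fun x => by positivity)) _
  have hFJ : ∀ t : ℝ, (∫ x in {x : EuclideanSpace ℝ (Fin 3) | (x,t) ∈ channel r₁ r₂},
      |(2*‖x‖)⁻¹ * ∫ s in (‖x‖-t)..(‖x‖+t), s * g s| ^ 10) ^ ((1:ℝ)/2)
      ≤ D * Real.sqrt (((R + |t|)^3)⁻¹) := by
    intro t
    have hI0 : (0:ℝ) ≤ ∫ x in {x : EuclideanSpace ℝ (Fin 3) | (x,t) ∈ channel r₁ r₂},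
        |(2*‖x‖)⁻¹ * ∫ s in (‖x‖-t)..(‖x‖+t), s * g s| ^ 10 :=
      integral_nonneg (fun x => by positivity)
    have h1 := Real.rpow_le_rpow hI0 (key t) (by norm_num : (0:ℝ) ≤ 1/2)
    refine h1.trans (le_of_eq ?_)
    rw [← Real.sqrt_eq_rpow, hD, ← Real.sqrt_mul hprod0]
  have hJint : Integrable (fun t : ℝ => D * Real.sqrt (((R + |t|)^3)⁻¹)) :=
    (integrable_J R hR).const_mul D
  have h1 : (∫ t : ℝ, (∫ x in {x : EuclideanSpace ℝ (Fin 3) | (x,t) ∈ channel r₁ r₂},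
      |(2*‖x‖)⁻¹ * ∫ s in (‖x‖-t)..(‖x‖+t), s * g s| ^ 10) ^ ((1:ℝ)/2))
      ≤ ∫ t : ℝ, D * Real.sqrt (((R + |t|)^3)⁻¹) :=
    integral_mono_of_nonneg (Filter.Eventually.of_forall hF0) hJint
      (Filter.Eventually.of_forall hFJ)
  have h2 : ∫ t : ℝ, D * Real.sqrt (((R + |t|)^3)⁻¹) = D * (4 * R ^ (-(1:ℝ)/2)) := by
    rw [integral_const_mul, intval_J R hR]
  have h4 : (0:ℝ) ≤ ∫ t : ℝ, (∫ x in {x : EuclideanSpace ℝ (Fin 3) | (x,t) ∈ channel r₁ r₂},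
      |(2*‖x‖)⁻¹ * ∫ s in (‖x‖-t)..(‖x‖+t), s * g s| ^ 10) ^ ((1:ℝ)/2) :=
    integral_nonneg hF0
  have h3 : (∫ t : ℝ, (∫ x in {x : EuclideanSpace ℝ (Fin 3) | (x,t) ∈ channel r₁ r₂},
      |(2*‖x‖)⁻¹ * ∫ s in (‖x‖-t)..(‖x‖+t), s * g s| ^ 10) ^ ((1:ℝ)/2))
      ≤ D * (4 * R ^ (-(1:ℝ)/2)) := h1.trans (le_of_eq h2)
  have hYle : Ynorm (channel r₁ r₂)
      (fun x t => (2 * ‖x‖)⁻¹ * ∫ s in (‖x‖ - t)..(‖x‖ + t), s * g s)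
      ≤ (D * (4 * R ^ (-(1:ℝ)/2))) ^ ((1:ℝ)/5) := by
    simp only [Ynorm]
    exact Real.rpow_le_rpow h4 h3 (by norm_num)
  refine hYle.trans ?_
  -- final algebra
  have hX0 : (0:ℝ) ≤ D * (4 * R ^ (-(1:ℝ)/2)) := by positivity
  have hRHS0 : (0:ℝ) ≤ (4 * Real.sqrt c1) ^ ((1:ℝ)/5) * ((r₂ - r₁) / R) ^ ((1:ℝ)/10) *
      Real.sqrt (4 * π * E) := by
    have hdiv : (0:ℝ) ≤ (r₂ - r₁) / R := div_nonneg (by linarith) hR.le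
    exact mul_nonneg (mul_nonneg (Real.rpow_nonneg (by positivity) _)
      (Real.rpow_nonneg hdiv _)) (Real.sqrt_nonneg _)
  apply le_of_pow_le_pow_left₀ (n := 10) (by norm_num) hRHS0
  have expand : ∀ (a : ℝ), 0 ≤ a → (a ^ ((1:ℝ)/5)) ^ (10:ℕ) = a ^ (2:ℕ) := by
    intro a ha
    rw [← Real.rpow_natCast (a ^ ((1:ℝ)/5)) 10, ← Real.rpow_mul ha]
    norm_num
  rw [expand _ hX0]
  have hRHSexp : ((4 * Real.sqrt c1) ^ ((1:ℝ)/5) * ((r₂ - r₁) / R) ^ ((1:ℝ)/10) *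
      Real.sqrt (4 * π * E)) ^ (10:ℕ)
      = (16 * c1) * ((r₂ - r₁) / R) * (4 * π * E)^5 := by
    rw [mul_pow, mul_pow, expand _ (by positivity)]
    have e2 : (((r₂ - r₁) / R) ^ ((1:ℝ)/10)) ^ (10:ℕ) = (r₂ - r₁) / R := by
      rw [← Real.rpow_natCast (((r₂ - r₁) / R) ^ ((1:ℝ)/10)) 10,
        ← Real.rpow_mul (div_nonneg (by linarith) hR.le)]
      norm_num
    have e3 : (Real.sqrt (4 * π * E)) ^ (10:ℕ) = (4 * π * E)^5 := by
      rw [show (10:ℕ) = 2*5 by norm_num, pow_mul,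
        Real.sq_sqrt (by positivity : (0:ℝ) ≤ 4 * π * E)]
    have e4 : (4 * Real.sqrt c1) ^ (2:ℕ) = 16 * c1 := by
      rw [mul_pow, Real.sq_sqrt (by linarith : (0:ℝ) ≤ c1)]
      norm_num
    rw [e2, e3, e4]
  rw [hRHSexp]
  have hXsq : (D * (4 * R ^ (-(1:ℝ)/2))) ^ (2:ℕ) = 16 * c1 * E^5 * (r₂ - r₁) * R⁻¹ := by
    have hDsq : D ^ (2:ℕ) = c1 * E^5 * (r₂ - r₁) := Real.sq_sqrt hprod0
    have hRsq : (R ^ (-(1:ℝ)/2)) ^ (2:ℕ) = R⁻¹ := by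
      rw [← Real.rpow_natCast (R ^ (-(1:ℝ)/2)) 2, ← Real.rpow_mul hR.le]
      norm_num
      exact (Real.rpow_neg_one R) ▸ by norm_num
    calc (D * (4 * R ^ (-(1:ℝ)/2))) ^ (2:ℕ)
        = D^(2:ℕ) * 16 * (R ^ (-(1:ℝ)/2))^(2:ℕ) := by ring
      _ = 16 * c1 * E^5 * (r₂ - r₁) * R⁻¹ := by rw [hDsq, hRsq]; ring
  rw [hXsq]
  have hπ1 : (1:ℝ) ≤ 1024 * π^5 := by
    have h3 : (1:ℝ) ≤ π := by linarith [Real.pi_gt_three]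
    have h5 : (1:ℝ) ≤ π^5 := one_le_pow₀ h3
    linarith
  have hK0 : (0:ℝ) ≤ 16 * c1 * E^5 * (r₂ - r₁) * R⁻¹ := by
    apply mul_nonneg (mul_nonneg (mul_nonneg (mul_nonneg (by norm_num) (by linarith))
      (by positivity)) (by linarith)) (by positivity)
  calc 16 * c1 * E^5 * (r₂ - r₁) * R⁻¹
      ≤ (16 * c1 * E^5 * (r₂ - r₁) * R⁻¹) * (1024 * π^5) :=
        le_mul_of_one_le_right hK0 hπ1
    _ = 16 * c1 * ((r₂ - r₁) / R) * (4 * π * E)^5 := by ring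
end
end

section
/- There is an absolute constant C > 0 with the following property. Let G ∈ L²(ℝ), let λ > 0, and suppose τ = (sup_{0<r<λ} (λ/r)·∫_{−r}^{r} |G(s)|² ds)^(1/2) + sup_{r>0} r^(−1/2)·∫_{−r}^{r} |G(s)| ds is finite. Then for all 0 ≤ r₁ < r₂ ≤ λ, the associated radial free wave v_L satisfies ‖χ_{Ω_{r₁,r₂}} v_L‖_Y ≤ C · ((r₂ − r₁)/λ)^(1/10) · τ. -/
open MeasureTheory Real Set

noncomputable section

/-! ### Auxiliary lemmas -/

section Aux

open scoped ENNReal NNReal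

lemma aux_rpow32 {y : ℝ} (hy : 0 < y) : y ^ (-(3:ℝ)/2) = (Real.sqrt y)⁻¹ ^ 3 := by
  have h1 : Real.sqrt y ^ 3 = y ^ ((3:ℝ)/2) := by
    rw [Real.sqrt_eq_rpow, ← Real.rpow_natCast (y ^ ((1:ℝ)/2)) 3, ← Real.rpow_mul hy.le]
    norm_num
  rw [inv_pow, h1, ← Real.rpow_neg hy.le]
  norm_num

lemma aux_isqrt3_mono {a b : ℝ} (ha : 0 < a) (hab : a ≤ b) :
    (Real.sqrt b)⁻¹ ^ 3 ≤ (Real.sqrt a)⁻¹ ^ 3 := by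
  have h1 : 0 < Real.sqrt a := Real.sqrt_pos.mpr ha
  have h2 : Real.sqrt a ≤ Real.sqrt b := Real.sqrt_le_sqrt hab
  have h3 : (Real.sqrt b)⁻¹ ≤ (Real.sqrt a)⁻¹ := inv_anti₀ h1 h2
  exact pow_le_pow_left₀ (by positivity) h3 3

lemma aux_majorant (lam : ℝ) (hlam : 0 < lam) :
    Integrable (fun t : ℝ => (Real.sqrt (lam + |t|))⁻¹ ^ 3) ∧
      ∫ t : ℝ, (Real.sqrt (lam + |t|))⁻¹ ^ 3 ≤ 6 / Real.sqrt lam := by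
  set f : ℝ → ℝ := fun u => (Real.sqrt (lam + u))⁻¹ ^ 3 with hf
  have hmeasf : Measurable f := by
    apply Measurable.pow_const
    exact ((Real.continuous_sqrt.comp (continuous_const.add continuous_id)).measurable).inv
  have hfnn : ∀ u, 0 ≤ f u := fun u => by positivity
  have hsq : Real.sqrt lam * Real.sqrt lam = lam := Real.mul_self_sqrt hlam.le
  have hs0 : 0 < Real.sqrt lam := Real.sqrt_pos.mpr hlam
  have hIoc : IntegrableOn f (Ioc 0 lam) := by
    have hfin : volume (Ioc (0:ℝ) lam) < ⊤ := by
      rw [Real.volume_Ioc]; exact ENNReal.ofReal_lt_top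
    refine Integrable.mono' (g := fun _ => (Real.sqrt lam)⁻¹ ^ 3)
      (integrableOn_const hfin.ne) hmeasf.aestronglyMeasurable ?_
    filter_upwards [ae_restrict_mem measurableSet_Ioc] with u hu
    rw [Real.norm_eq_abs, abs_of_nonneg (hfnn u)]
    exact aux_isqrt3_mono hlam (by cases hu with | intro a b => linarith)
  have hIoi : IntegrableOn f (Ioi lam) := by
    refine Integrable.mono' (g := fun u => u ^ (-(3:ℝ)/2))
      (integrableOn_Ioi_rpow_of_lt (by norm_num) hlam) hmeasf.aestronglyMeasurable ?_
    filter_upwards [ae_restrict_mem measurableSet_Ioi] with u hu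
    have h0 : (0:ℝ) < u := hlam.trans hu
    rw [Real.norm_eq_abs, abs_of_nonneg (hfnn u), aux_rpow32 h0]
    exact aux_isqrt3_mono h0 (by linarith)
  have hIoi0 : IntegrableOn f (Ioi 0) := by
    have : Ioc (0:ℝ) lam ∪ Ioi lam = Ioi 0 := Ioc_union_Ioi_eq_Ioi hlam.le
    rw [← this]; exact hIoc.union hIoi
  have hint : Integrable (fun t : ℝ => (Real.sqrt (lam + |t|))⁻¹ ^ 3) := by
    have hIoi0' : IntegrableOn (fun t : ℝ => (Real.sqrt (lam + |t|))⁻¹ ^ 3) (Ioi 0) := by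
      refine hIoi0.congr_fun (fun u hu => ?_) measurableSet_Ioi
      rw [abs_of_nonneg (le_of_lt hu)]
    have hIic : IntegrableOn (fun t : ℝ => (Real.sqrt (lam + |t|))⁻¹ ^ 3) (Iic 0) := by
      rw [← Measure.map_neg_eq_self (volume : Measure ℝ)]
      have m : MeasurableEmbedding fun x : ℝ => -x := (Homeomorph.neg ℝ).measurableEmbedding
      rw [m.integrableOn_map_iff]
      simp_rw [Function.comp_def, abs_neg, neg_preimage, neg_Iic, neg_zero]
      exact (integrableOn_Ici_iff_integrableOn_Ioi).mpr hIoi0'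
    have huniv : Iic (0:ℝ) ∪ Ioi 0 = univ := Iic_union_Ioi
    rw [← integrableOn_univ, ← huniv]
    exact hIic.union hIoi0'
  refine ⟨hint, ?_⟩
  rw [integral_comp_abs (f := f)]
  have hsplit : ∫ u in Ioi (0:ℝ), f u = (∫ u in Ioc 0 lam, f u) + ∫ u in Ioi lam, f u := by
    rw [← setIntegral_union (Ioc_disjoint_Ioi le_rfl) measurableSet_Ioi hIoc hIoi,
      Ioc_union_Ioi_eq_Ioi hlam.le]
  have h1 : ∫ u in Ioc (0:ℝ) lam, f u ≤ 1 / Real.sqrt lam := by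
    have hfin : volume (Ioc (0:ℝ) lam) < ⊤ := by
      rw [Real.volume_Ioc]; exact ENNReal.ofReal_lt_top
    have hle : ∫ u in Ioc (0:ℝ) lam, f u ≤ ∫ _u in Ioc (0:ℝ) lam, (Real.sqrt lam)⁻¹ ^ 3 := by
      refine setIntegral_mono_on hIoc (integrableOn_const hfin.ne)
        measurableSet_Ioc (fun u hu => ?_)
      exact aux_isqrt3_mono hlam (by cases hu with | intro a b => linarith)
    refine hle.trans (le_of_eq ?_)
    rw [setIntegral_const, Real.volume_real_Ioc_of_le hlam.le, sub_zero, smul_eq_mul]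
    field_simp
    nlinarith [hsq]
  have h2 : ∫ u in Ioi lam, f u ≤ 2 / Real.sqrt lam := by
    have hle : ∫ u in Ioi lam, f u ≤ ∫ u in Ioi lam, u ^ (-(3:ℝ)/2) := by
      refine setIntegral_mono_on hIoi (integrableOn_Ioi_rpow_of_lt (by norm_num) hlam)
        measurableSet_Ioi (fun u hu => ?_)
      rw [aux_rpow32 (hlam.trans hu)]
      exact aux_isqrt3_mono (hlam.trans hu) (by linarith)
    refine hle.trans ?_
    rw [integral_Ioi_rpow_of_lt (by norm_num) hlam]
    have he : (-(3:ℝ)/2 + 1) = -(1:ℝ)/2 := by norm_num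
    rw [he]
    have hval : lam ^ (-(1:ℝ)/2) = 1 / Real.sqrt lam := by
      rw [Real.sqrt_eq_rpow, one_div, ← Real.rpow_neg hlam.le]
      norm_num
    rw [hval]
    have : -(1 / Real.sqrt lam / (-1/2)) = 2 / Real.sqrt lam := by ring
    linarith [this.le, this.ge]
  rw [hsplit]
  have heq : 2 * ((1:ℝ) / Real.sqrt lam + 2 / Real.sqrt lam) = 6 / Real.sqrt lam := by ring
  linarith

lemma aux_CS {G : ℝ → ℝ} (hG : MemLp G 2 (volume : Measure ℝ)) {r : ℝ} (hr : 0 < r) :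
    ∫ s in (-r)..r, |G s| ≤ Real.sqrt (2*r) * Real.sqrt (∫ s in (-r)..r, G s ^ 2) := by
  have hle : -r ≤ r := by linarith
  rw [intervalIntegral.integral_of_le hle, intervalIntegral.integral_of_le hle]
  set μr := (volume : Measure ℝ).restrict (Ioc (-r) r) with hμr
  haveI : IsFiniteMeasure μr := by
    constructor
    rw [hμr, Measure.restrict_apply_univ, Real.volume_Ioc]
    exact ENNReal.ofReal_lt_top
  have hconj : Real.HolderConjugate 2 2 := Real.holderConjugate_iff.mpr ⟨by norm_num, by norm_num⟩
  have hf2 : MemLp (fun s => |G s|) (ENNReal.ofReal 2) μr := by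
    have h2 : (ENNReal.ofReal 2) = (2 : ℝ≥0∞) := by
      simp [ENNReal.ofReal_ofNat]
    rw [h2]
    have := (hG.restrict (Ioc (-r) r)).norm
    simpa [Real.norm_eq_abs] using this
  have hg2 : MemLp (fun _ : ℝ => (1:ℝ)) (ENNReal.ofReal 2) μr := memLp_const 1
  have hH := integral_mul_le_Lp_mul_Lq_of_nonneg hconj
    (f := fun s => |G s|) (g := fun _ => (1:ℝ))
    (Filter.Eventually.of_forall fun s => abs_nonneg _)
    (Filter.Eventually.of_forall fun _ => zero_le_one) hf2 hg2
  simp only [mul_one] at hH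
  have e1 : ∫ a, |G a| ^ (2:ℝ) ∂μr = ∫ a, G a ^ 2 ∂μr := by
    congr 1; funext a
    rw [show (2:ℝ) = ((2:ℕ):ℝ) by norm_num, Real.rpow_natCast, sq_abs]
  have e2 : ∫ _a, (1:ℝ) ^ (2:ℝ) ∂μr = 2 * r := by
    simp only [Real.one_rpow]
    rw [integral_const, smul_eq_mul, mul_one, hμr, measureReal_restrict_apply_univ,
      Real.volume_real_Ioc_of_le hle]
    ring
  rw [e1, e2] at hH
  calc ∫ a, |G a| ∂μr ≤ (∫ a, G a ^ 2 ∂μr) ^ ((1:ℝ)/2) * (2*r) ^ ((1:ℝ)/2) := by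
        simpa [one_div] using hH
  _ = Real.sqrt (2*r) * Real.sqrt (∫ a, G a ^ 2 ∂μr) := by
        rw [← Real.sqrt_eq_rpow, ← Real.sqrt_eq_rpow]; ring

lemma aux_intInt {G : ℝ → ℝ} (hG : MemLp G 2 (volume : Measure ℝ)) (a b : ℝ) :
    IntervalIntegrable G volume a b := by
  rw [intervalIntegrable_iff]
  haveI : IsFiniteMeasure ((volume : Measure ℝ).restrict (Set.uIoc a b)) := by
    constructor
    rw [Measure.restrict_apply_univ, uIoc, Real.volume_Ioc]
    exact ENNReal.ofReal_lt_top
  exact (hG.restrict _).integrable one_le_two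

lemma aux_B_nonneg {G : ℝ → ℝ} (hbB : BddAbove (tauB G)) : 0 ≤ sSup (tauB G) := by
  have hel : (∫ s in (-(1:ℝ))..1, |G s|) / Real.sqrt 1 ∈ tauB G := ⟨1, one_pos, rfl⟩
  have h0 : 0 ≤ (∫ s in (-(1:ℝ))..1, |G s|) / Real.sqrt 1 := by
    apply div_nonneg _ (Real.sqrt_nonneg _)
    exact intervalIntegral.integral_nonneg (by norm_num) (fun u _ => abs_nonneg _)
  exact h0.trans (le_csSup hbB hel)

lemma aux_A_nonneg {G : ℝ → ℝ} {lam : ℝ} (hlam : 0 < lam) (hbA : BddAbove (tauA G lam)) :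
    0 ≤ sSup (tauA G lam) := by
  have hel : (lam / (lam/2)) * ∫ s in (-(lam/2))..(lam/2), (G s)^2 ∈ tauA G lam :=
    ⟨lam/2, by linarith, by linarith, rfl⟩
  have h0 : 0 ≤ (lam / (lam/2)) * ∫ s in (-(lam/2))..(lam/2), (G s)^2 := by
    apply mul_nonneg (by positivity)
    exact intervalIntegral.integral_nonneg (by linarith) (fun u _ => sq_nonneg _)
  exact h0.trans (le_csSup hbA hel)

lemma aux_B_bound {G : ℝ → ℝ} (hbB : BddAbove (tauB G)) {r : ℝ} (hr : 0 < r) :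
    ∫ s in (-r)..r, |G s| ≤ sSup (tauB G) * Real.sqrt r := by
  have h := le_csSup hbB (⟨r, hr, rfl⟩ : (∫ s in (-r)..r, |G s|) / Real.sqrt r ∈ tauB G)
  rwa [div_le_iff₀ (Real.sqrt_pos.mpr hr)] at h

lemma aux_A_bound {G : ℝ → ℝ} {lam : ℝ} (hlam : 0 < lam) (hbA : BddAbove (tauA G lam))
    {r : ℝ} (hr : 0 < r) (hrlam : r < lam) :
    ∫ s in (-r)..r, (G s)^2 ≤ sSup (tauA G lam) * r / lam := by
  have h := le_csSup hbA (⟨r, hr, hrlam, rfl⟩ :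
    (lam / r) * ∫ s in (-r)..r, (G s)^2 ∈ tauA G lam)
  rw [div_mul_eq_mul_div, div_le_iff₀ hr] at h
  rw [le_div_iff₀ hlam]
  linarith

lemma aux_pointwise {G : ℝ → ℝ} (hG : MemLp G 2 (volume : Measure ℝ)) {lam r₁ r₂ : ℝ}
    (hlam : 0 < lam) (hbA : BddAbove (tauA G lam)) (hbB : BddAbove (tauB G))
    (h1 : 0 ≤ r₁) {x : EuclideanSpace ℝ (Fin 3)} {t : ℝ}
    (hx : (x, t) ∈ channel r₁ r₂) :
    |freeWave G x t| ≤ 4 * tau G lam / Real.sqrt (lam + |t|) := by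
  obtain ⟨hax, hxb⟩ := hx
  simp only at hax hxb
  set ρ := ‖x‖ with hρ
  set A := sSup (tauA G lam) with hA
  set B := sSup (tauB G) with hB
  have hρt : |t| < ρ := lt_of_le_of_lt (le_add_of_nonneg_right h1) hax
  have hρ0 : 0 < ρ := (abs_nonneg t).trans_lt hρt
  have hlt0 : 0 < lam + |t| := by positivity
  have hsql : 0 < Real.sqrt (lam + |t|) := Real.sqrt_pos.mpr hlt0
  have hB0 : 0 ≤ B := aux_B_nonneg hbB
  have hA0 : 0 ≤ A := aux_A_nonneg hlam hbA
  have htau0 : 0 ≤ tau G lam := add_nonneg (Real.sqrt_nonneg _) hB0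
  have hτB : B ≤ tau G lam := le_add_of_nonneg_left (Real.sqrt_nonneg _)
  have hτA : Real.sqrt A ≤ tau G lam := le_add_of_nonneg_right hB0
  set r := |t| + ρ with hr
  have hr0 : 0 < r := by positivity
  have hr2ρ : r < 2 * ρ := by simp only [hr]; linarith
  have habs : ∀ a b : ℝ, IntervalIntegrable (fun s => |G s|) volume a b :=
    fun a b => (aux_intInt hG a b).abs
  have step1 : |freeWave G x t| ≤ ρ⁻¹ * ∫ s in (-r)..r, |G s| := by
    have s1 : |freeWave G x t| ≤ ρ⁻¹ * ∫ s in (t-ρ)..(t+ρ), |G s| := by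
      rw [freeWave, abs_mul, abs_of_nonneg (inv_nonneg.mpr hρ0.le)]
      exact mul_le_mul_of_nonneg_left
        (intervalIntegral.abs_integral_le_integral_abs (by linarith))
        (inv_nonneg.mpr hρ0.le)
    have s2 : ∫ s in (t-ρ)..(t+ρ), |G s| ≤ ∫ s in (-r)..r, |G s| := by
      rw [intervalIntegral.integral_of_le (by linarith),
        intervalIntegral.integral_of_le (by linarith : -r ≤ r)]
      apply setIntegral_mono_set
      · exact (intervalIntegrable_iff_integrableOn_Ioc_of_le (by linarith : -r ≤ r)).mp
          (habs (-r) r)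
      · exact Filter.Eventually.of_forall (fun s => abs_nonneg _)
      · apply HasSubset.Subset.eventuallyLE
        apply Ioc_subset_Ioc
        · have := neg_abs_le t; simp only [hr]; linarith
        · have := le_abs_self t; simp only [hr]; linarith
    calc |freeWave G x t| ≤ ρ⁻¹ * ∫ s in (t-ρ)..(t+ρ), |G s| := s1
    _ ≤ ρ⁻¹ * ∫ s in (-r)..r, |G s| :=
        mul_le_mul_of_nonneg_left s2 (inv_nonneg.mpr hρ0.le)
  by_cases hc : 2 * ρ ≤ lam
  · have hrlam : r < lam := lt_of_lt_of_le hr2ρ hc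
    have hcs := aux_CS hG hr0
    have hAr := aux_A_bound hlam hbA hr0 hrlam
    have c1 : ∫ s in (-r)..r, |G s| ≤ Real.sqrt (2*r) * Real.sqrt (A * r / lam) :=
      hcs.trans (mul_le_mul_of_nonneg_left (Real.sqrt_le_sqrt hAr) (Real.sqrt_nonneg _))
    have c2 : Real.sqrt (2*r) * Real.sqrt (A * r / lam)
        ≤ Real.sqrt (4*ρ) * Real.sqrt (A * (2*ρ) / lam) := by
      apply mul_le_mul (Real.sqrt_le_sqrt (by linarith)) (Real.sqrt_le_sqrt ?_)
        (Real.sqrt_nonneg _) (Real.sqrt_nonneg _)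
      gcongr <;> linarith
    have e1 : Real.sqrt (4*ρ) * Real.sqrt (A * (2*ρ) / lam) = ρ * Real.sqrt (8*A/lam) := by
      rw [← Real.sqrt_mul (by positivity),
        show 4*ρ*(A*(2*ρ)/lam) = ρ^2*(8*A/lam) by ring,
        Real.sqrt_mul (sq_nonneg ρ), Real.sqrt_sq hρ0.le]
    have step2 : |freeWave G x t| ≤ Real.sqrt (8*A/lam) := by
      have := step1.trans (mul_le_mul_of_nonneg_left (c1.trans c2) (inv_nonneg.mpr hρ0.le))
      rw [e1, ← mul_assoc, inv_mul_cancel₀ hρ0.ne', one_mul] at this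
      exact this
    refine step2.trans ?_
    rw [le_div_iff₀ hsql]
    have hbd : Real.sqrt (lam + |t|) ≤ Real.sqrt (2*lam) :=
      Real.sqrt_le_sqrt (by linarith)
    calc Real.sqrt (8*A/lam) * Real.sqrt (lam + |t|)
        ≤ Real.sqrt (8*A/lam) * Real.sqrt (2*lam) :=
          mul_le_mul_of_nonneg_left hbd (Real.sqrt_nonneg _)
    _ = 4 * Real.sqrt A := by
        rw [← Real.sqrt_mul (by positivity),
          show 8*A/lam*(2*lam) = 4^2*A by field_simp; ring,
          Real.sqrt_mul (by positivity : (0:ℝ) ≤ 4^2), Real.sqrt_sq (by norm_num : (0:ℝ) ≤ 4)]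
    _ ≤ 4 * tau G lam := by linarith
  · push_neg at hc
    have c1 : ∫ s in (-r)..r, |G s| ≤ B * Real.sqrt (2*ρ) :=
      (aux_B_bound hbB hr0).trans
        (mul_le_mul_of_nonneg_left (Real.sqrt_le_sqrt hr2ρ.le) hB0)
    have step2 : |freeWave G x t| ≤ ρ⁻¹ * (B * Real.sqrt (2*ρ)) :=
      step1.trans (mul_le_mul_of_nonneg_left c1 (inv_nonneg.mpr hρ0.le))
    refine step2.trans ?_
    rw [le_div_iff₀ hsql]
    have hbd : Real.sqrt (lam + |t|) ≤ Real.sqrt (3*ρ) :=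
      Real.sqrt_le_sqrt (by linarith)
    have e : Real.sqrt (2*ρ) * Real.sqrt (3*ρ) = ρ * Real.sqrt 6 := by
      rw [← Real.sqrt_mul (by positivity), show 2*ρ*(3*ρ) = ρ^2*6 by ring,
        Real.sqrt_mul (sq_nonneg ρ), Real.sqrt_sq hρ0.le]
    have hsq6 : Real.sqrt 6 ≤ 3 := by
      rw [show (3:ℝ) = Real.sqrt 9 by rw [show (9:ℝ) = 3^2 by norm_num, Real.sqrt_sq]; norm_num]
      exact Real.sqrt_le_sqrt (by norm_num)
    calc ρ⁻¹ * (B * Real.sqrt (2*ρ)) * Real.sqrt (lam + |t|)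
        ≤ ρ⁻¹ * (B * Real.sqrt (2*ρ)) * Real.sqrt (3*ρ) := by
          apply mul_le_mul_of_nonneg_left hbd (by positivity)
    _ = (Real.sqrt (2*ρ) * Real.sqrt (3*ρ)) * B * ρ⁻¹ := by ring
    _ = ρ * Real.sqrt 6 * B * ρ⁻¹ := by rw [e]
    _ = Real.sqrt 6 * B := by field_simp
    _ ≤ 4 * tau G lam := by nlinarith

def c3 : ℝ := Real.sqrt Real.pi ^ 3 / Real.Gamma ((3:ℝ) / 2 + 1)

lemma c3_pos : 0 < c3 := by
  have h1 : 0 < Real.Gamma ((3:ℝ)/2 + 1) := Real.Gamma_pos_of_pos (by norm_num)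
  have h2 : 0 < Real.sqrt Real.pi := Real.sqrt_pos.mpr Real.pi_pos
  exact div_pos (by positivity) h1

lemma aux_vol {r₁ r₂ lam t : ℝ} (h1 : 0 ≤ r₁) (h12 : r₁ < r₂) (h2lam : r₂ ≤ lam) :
    (volume {x : EuclideanSpace ℝ (Fin 3) | |t| + r₁ < ‖x‖ ∧ ‖x‖ < |t| + r₂}).toReal
      ≤ c3 * (3 * (r₂ - r₁) * (lam + |t|)^2) := by
  set a := |t| + r₁ with hadef
  set b := |t| + r₂ with hbdef
  have ha : 0 ≤ a := by positivity
  have hab : a < b := by simp only [hadef, hbdef]; linarith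
  have hb0 : 0 ≤ b := le_of_lt (lt_of_le_of_lt ha hab)
  have hblam : b ≤ lam + |t| := by simp only [hbdef]; linarith
  have hSeq : {x : EuclideanSpace ℝ (Fin 3) | a < ‖x‖ ∧ ‖x‖ < b}
      = Metric.ball (0 : EuclideanSpace ℝ (Fin 3)) b \
        Metric.closedBall (0 : EuclideanSpace ℝ (Fin 3)) a := by
    ext x
    simp only [mem_setOf_eq, mem_diff, Metric.mem_ball, Metric.mem_closedBall,
      dist_zero_right, not_le]
    tauto
  have hvb : volume (Metric.ball (0 : EuclideanSpace ℝ (Fin 3)) b)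
      = ENNReal.ofReal b ^ 3 * ENNReal.ofReal c3 := by
    rw [EuclideanSpace.volume_ball]
    simp [Fintype.card_fin, c3]
  have hvcb : volume (Metric.closedBall (0 : EuclideanSpace ℝ (Fin 3)) a)
      = ENNReal.ofReal a ^ 3 * ENNReal.ofReal c3 := by
    rw [EuclideanSpace.volume_closedBall]
    simp [Fintype.card_fin, c3]
  have hdiff : volume ({x : EuclideanSpace ℝ (Fin 3) | a < ‖x‖ ∧ ‖x‖ < b})
      = ENNReal.ofReal b ^ 3 * ENNReal.ofReal c3 - ENNReal.ofReal a ^ 3 * ENNReal.ofReal c3 := by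
    rw [hSeq, measure_diff (Metric.closedBall_subset_ball hab)
      measurableSet_closedBall.nullMeasurableSet measure_closedBall_lt_top.ne, hvb, hvcb]
  rw [hdiff]
  have hle : ENNReal.ofReal a ^ 3 * ENNReal.ofReal c3
      ≤ ENNReal.ofReal b ^ 3 * ENNReal.ofReal c3 := by
    apply mul_le_mul_left
    exact pow_le_pow_left' (ENNReal.ofReal_le_ofReal hab.le) 3
  have hfin : ENNReal.ofReal b ^ 3 * ENNReal.ofReal c3 ≠ ⊤ := by
    apply ENNReal.mul_ne_top (by simp [ENNReal.pow_ne_top]) (by simp)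
  rw [ENNReal.toReal_sub_of_le hle hfin]
  have ht1 : (ENNReal.ofReal b ^ 3 * ENNReal.ofReal c3).toReal = b^3 * c3 := by
    rw [ENNReal.toReal_mul, ENNReal.toReal_pow, ENNReal.toReal_ofReal hb0,
      ENNReal.toReal_ofReal c3_pos.le]
  have ht2 : (ENNReal.ofReal a ^ 3 * ENNReal.ofReal c3).toReal = a^3 * c3 := by
    rw [ENNReal.toReal_mul, ENNReal.toReal_pow, ENNReal.toReal_ofReal ha,
      ENNReal.toReal_ofReal c3_pos.le]
  rw [ht1, ht2]
  have hba : b - a = r₂ - r₁ := by simp only [hadef, hbdef]; ring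
  have haL : a ≤ lam + |t| := hab.le.trans hblam
  have hL0 : (0:ℝ) ≤ lam + |t| := ha.trans haL
  have h2 : b^2 + a*b + a^2 ≤ 3*(lam+|t|)^2 := by
    nlinarith [mul_le_mul hblam hblam hb0 hL0, mul_le_mul haL haL ha hL0,
      mul_le_mul haL hblam hb0 hL0]
  have key : b^3 - a^3 ≤ (b-a) * (3*(lam+|t|)^2) := by
    have e : b^3 - a^3 = (b-a)*(b^2+a*b+a^2) := by ring
    rw [e]
    exact mul_le_mul_of_nonneg_left h2 (by linarith)
  have hc3 := c3_pos
  rw [← hba]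
  nlinarith [mul_le_mul_of_nonneg_left key hc3.le]

end Aux

theorem stmt10 :
    ∃ C : ℝ, 0 < C ∧ ∀ (G : ℝ → ℝ) (lam r₁ r₂ : ℝ),
      MemLp G 2 (volume : Measure ℝ) → 0 < lam →
      BddAbove (tauA G lam) → BddAbove (tauB G) →
      0 ≤ r₁ → r₁ < r₂ → r₂ ≤ lam →
      Ynorm (channel r₁ r₂) (freeWave G)
        ≤ C * ((r₂ - r₁) / lam) ^ ((1:ℝ)/10) * tau G lam := by
  classical
  set D : ℝ := 6 * 4^5 * Real.sqrt (3 * c3) with hD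
  have hD0 : 0 ≤ D := by positivity
  refine ⟨D ^ ((1:ℝ)/5) + 1, by positivity, ?_⟩
  intro G lam r₁ r₂ hG hlam hbA hbB h1 h12 h2lam
  set τ := tau G lam with hτ
  have htau0 : 0 ≤ τ := add_nonneg (Real.sqrt_nonneg _) (aux_B_nonneg hbB)
  have hθ0 : 0 < (r₂ - r₁) / lam := div_pos (by linarith) hlam
  set S : ℝ → Set (EuclideanSpace ℝ (Fin 3)) := fun t => {x | (x, t) ∈ channel r₁ r₂} with hS
  have hSeq : ∀ t, S t = Metric.ball (0 : EuclideanSpace ℝ (Fin 3)) (|t| + r₂) \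
      Metric.closedBall (0 : EuclideanSpace ℝ (Fin 3)) (|t| + r₁) := by
    intro t; ext x
    simp only [hS, mem_setOf_eq, channel, mem_diff, Metric.mem_ball, Metric.mem_closedBall,
      dist_zero_right, not_le]
    tauto
  have hSmeas : ∀ t, MeasurableSet (S t) := fun t => by
    rw [hSeq t]; exact measurableSet_ball.diff measurableSet_closedBall
  have hSfin : ∀ t, volume (S t) < ⊤ := fun t => by
    rw [hSeq t]
    exact lt_of_le_of_lt (measure_mono diff_subset) measure_ball_lt_top
  set g : ℝ → ℝ := fun t => (∫ x in S t, |freeWave G x t| ^ 10) ^ ((1:ℝ)/2) with hg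
  have hg0 : ∀ t, 0 ≤ g t := fun t =>
    Real.rpow_nonneg (integral_nonneg fun x => by positivity) _
  set Kc : ℝ := 4^5 * τ^5 * Real.sqrt (c3 * (3 * (r₂ - r₁))) with hKc
  have hKc0 : 0 ≤ Kc :=
    mul_nonneg (mul_nonneg (by positivity) (pow_nonneg htau0 5)) (Real.sqrt_nonneg _)
  have hgh : ∀ t, g t ≤ Kc * (Real.sqrt (lam + |t|))⁻¹ ^ 3 := by
    intro t
    have hL0 : (0:ℝ) < lam + |t| := by positivity
    set s := Real.sqrt (lam + |t|) with hsdef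
    have hs0 : 0 < s := Real.sqrt_pos.mpr hL0
    set M : ℝ := 4 * τ / s with hM
    have hM0 : 0 ≤ M := div_nonneg (mul_nonneg (by norm_num) htau0) hs0.le
    have hVS : (volume (S t)).toReal ≤ c3 * (3 * (r₂ - r₁) * (lam + |t|)^2) :=
      aux_vol h1 h12 h2lam
    have hptw : ∀ᵐ x ∂(volume.restrict (S t)), |freeWave G x t| ^ 10 ≤ M ^ 10 := by
      refine (ae_restrict_iff' (hSmeas t)).mpr (Filter.Eventually.of_forall fun x hx => ?_)
      exact pow_le_pow_left₀ (abs_nonneg _) (aux_pointwise hG hlam hbA hbB h1 hx) 10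
    have hinner : ∫ x in S t, |freeWave G x t| ^ 10 ≤ (volume (S t)).toReal * M ^ 10 := by
      have h := integral_mono_of_nonneg (Filter.Eventually.of_forall fun x => by positivity)
        (integrableOn_const (C := M ^ 10) (hSfin t).ne) hptw
      rwa [setIntegral_const, smul_eq_mul] at h
    have hinner2 : ∫ x in S t, |freeWave G x t| ^ 10
        ≤ c3 * (3 * (r₂ - r₁) * (lam + |t|)^2) * M ^ 10 :=
      hinner.trans (mul_le_mul_of_nonneg_right hVS (by positivity))
    have hgs : g t = Real.sqrt (∫ x in S t, |freeWave G x t| ^ 10) := by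
      rw [hg, Real.sqrt_eq_rpow]
    rw [hgs]
    have hsq := Real.sqrt_le_sqrt hinner2
    refine hsq.trans (le_of_eq ?_)
    have hLs : lam + |t| = s^2 := (Real.sq_sqrt hL0.le).symm
    have hfact : c3 * (3 * (r₂ - r₁) * (lam + |t|)^2) * M ^ 10
        = (c3 * (3 * (r₂ - r₁))) * (((lam + |t|) * M^5)^2) := by ring
    rw [hfact, Real.sqrt_mul (mul_nonneg c3_pos.le (by linarith)),
      Real.sqrt_sq (mul_nonneg hL0.le (pow_nonneg hM0 5))]
    rw [hKc, hM, div_pow, mul_pow, hLs]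
    field_simp
  obtain ⟨hmaj_int, hmaj_val⟩ := aux_majorant lam hlam
  have houter : ∫ t, g t ≤ Kc * (6 / Real.sqrt lam) := by
    have h := integral_mono_of_nonneg (Filter.Eventually.of_forall hg0)
      (hmaj_int.const_mul Kc) (Filter.Eventually.of_forall hgh)
    refine h.trans ?_
    rw [integral_const_mul]
    exact mul_le_mul_of_nonneg_left hmaj_val hKc0
  have hbound : ∫ t, g t ≤ D * Real.sqrt ((r₂ - r₁)/lam) * τ^5 := by
    refine houter.trans (le_of_eq ?_)
    rw [hKc, hD, Real.sqrt_div (by linarith : (0:ℝ) ≤ r₂ - r₁),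
      show c3 * (3 * (r₂ - r₁)) = (3 * c3) * (r₂ - r₁) by ring,
      Real.sqrt_mul (mul_nonneg (by norm_num) c3_pos.le)]
    ring
  have hYnorm : Ynorm (channel r₁ r₂) (freeWave G) = (∫ t, g t) ^ ((1:ℝ)/5) := rfl
  rw [hYnorm]
  have hIg0 : 0 ≤ ∫ t, g t := integral_nonneg hg0
  calc (∫ t, g t) ^ ((1:ℝ)/5)
      ≤ (D * Real.sqrt ((r₂ - r₁)/lam) * τ^5) ^ ((1:ℝ)/5) :=
        Real.rpow_le_rpow hIg0 hbound (by norm_num)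
  _ = D ^ ((1:ℝ)/5) * ((r₂ - r₁)/lam) ^ ((1:ℝ)/10) * τ := by
      rw [Real.mul_rpow (by positivity) (pow_nonneg htau0 5),
        Real.mul_rpow hD0 (Real.sqrt_nonneg _)]
      congr 1
      · congr 1
        rw [Real.sqrt_eq_rpow, ← Real.rpow_mul hθ0.le]
        norm_num
      · rw [← Real.rpow_natCast τ 5, ← Real.rpow_mul htau0]
        norm_num
  _ ≤ (D ^ ((1:ℝ)/5) + 1) * ((r₂ - r₁)/lam) ^ ((1:ℝ)/10) * τ := by
      have h10 : (0:ℝ) ≤ ((r₂ - r₁)/lam) ^ ((1:ℝ)/10) := Real.rpow_nonneg hθ0.le _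
      have hle : D ^ ((1:ℝ)/5) ≤ D ^ ((1:ℝ)/5) + 1 := by linarith
      exact mul_le_mul_of_nonneg_right (mul_le_mul_of_nonneg_right hle h10) htau0
end
end

section
/- There is an absolute constant C > 0 with the following property. Let G ∈ L²(ℝ), let λ > 0, and suppose τ = (sup_{0<r<λ} (λ/r)·∫_{−r}^{r} |G(s)|² ds)^(1/2) + sup_{r>0} r^(−1/2)·∫_{−r}^{r} |G(s)| ds is finite. Then for all 1 ≤ r₁ < r₂ ≤ λ, the associated radial free wave v_L satisfies ‖χ_{Ω_{r₁,r₂}} W⁴·v_L‖_{L¹L²} ≤ C · τ · λ^(−1/2) · r₁^(−3/2). -/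
open MeasureTheory Real Set

noncomputable section

/-! ### Auxiliary material for the proof -/

local notation "E3" => EuclideanSpace ℝ (Fin 3)

namespace Stmt11Aux

open Module

lemma sqrt_add_le' (a b : ℝ) (ha : 0 ≤ a) (hb : 0 ≤ b) :
    Real.sqrt (a + b) ≤ Real.sqrt a + Real.sqrt b := by
  have h1 := Real.sq_sqrt ha
  have h2 := Real.sq_sqrt hb
  have h3 := Real.sqrt_nonneg a
  have h4 := Real.sqrt_nonneg b
  nlinarith [Real.sq_sqrt (by linarith : (0:ℝ) ≤ a + b), Real.sqrt_nonneg (a+b)]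

lemma ext_integrableOn {e : ℝ} (he : 3 < e) {ρ : ℝ} (hρ : 1 ≤ ρ) :
    IntegrableOn (fun x : E3 => ‖x‖ ^ (-e)) {x : E3 | ρ < ‖x‖} := by
  have hdim : (finrank ℝ E3 : ℝ) < e := by
    simp only [finrank_euclideanSpace_fin]; norm_num; linarith
  have hjb : Integrable (fun x : E3 => (2:ℝ)^e * (1 + ‖x‖) ^ (-e)) :=
    (integrable_one_add_norm hdim).const_mul _
  have hmeas : MeasurableSet {x : E3 | ρ < ‖x‖} :=
    measurableSet_lt measurable_const measurable_norm
  refine (hjb.integrableOn).mono' ((measurable_norm.pow_const (-e)).aestronglyMeasurable) ?_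
  refine (ae_restrict_iff' hmeas).2 (Filter.Eventually.of_forall fun x hx => ?_)
  have hx1 : (1:ℝ) ≤ ‖x‖ := le_trans hρ (le_of_lt hx)
  have hx0 : (0:ℝ) < ‖x‖ := lt_of_lt_of_le one_pos hx1
  rw [Real.norm_eq_abs, abs_of_nonneg (Real.rpow_nonneg (norm_nonneg x) _)]
  have h1 : (1 + ‖x‖) / 2 ≤ ‖x‖ := by linarith
  have h2 : ‖x‖ ^ (-e) ≤ ((1 + ‖x‖)/2) ^ (-e) :=
    Real.rpow_le_rpow_of_nonpos (by linarith) h1 (by linarith)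
  calc ‖x‖ ^ (-e) ≤ ((1 + ‖x‖)/2) ^ (-e) := h2
    _ = (2:ℝ)^e * (1 + ‖x‖) ^ (-e) := by
        rw [Real.div_rpow (by linarith) (by norm_num)]
        rw [div_eq_mul_inv, ← Real.rpow_neg (by norm_num : (0:ℝ) ≤ 2), neg_neg, mul_comm]

lemma ext_integral {e : ℝ} (he : 3 < e) {ρ : ℝ} (hρ : 0 < ρ) :
    ∫ x in {x : E3 | ρ < ‖x‖}, ‖x‖ ^ (-e)
      = (3 * (volume (Metric.ball (0:E3) 1)).toReal / (e - 3)) * ρ ^ (3 - e) := by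
  set f : ℝ → ℝ := Set.indicator (Ioi ρ) (fun r => r ^ (-e)) with hf
  have hmeas : MeasurableSet {x : E3 | ρ < ‖x‖} :=
    measurableSet_lt measurable_const measurable_norm
  have h1 : ∫ x in {x : E3 | ρ < ‖x‖}, ‖x‖ ^ (-e) = ∫ x : E3, f ‖x‖ := by
    rw [← integral_indicator hmeas]
    congr 1
  rw [h1, integral_fun_norm_addHaar (volume : Measure E3) f]
  have hrank : finrank ℝ E3 = 3 := finrank_euclideanSpace_fin
  rw [hrank]
  have h2 : ∫ y in Ioi (0:ℝ), y ^ (3 - 1) • f y = ∫ y in Ioi ρ, y ^ (2:ℕ) * y ^ (-e) := by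
    have : ∀ y : ℝ, y ^ (3-1) • f y = Set.indicator (Ioi ρ) (fun y => y ^ (2:ℕ) * y ^ (-e)) y := by
      intro y
      by_cases h : y ∈ Ioi ρ <;> simp [hf, Set.indicator_apply, h, smul_eq_mul]
    simp_rw [this]
    rw [integral_indicator measurableSet_Ioi, Measure.restrict_restrict measurableSet_Ioi,
      Set.Ioi_inter_Ioi, max_eq_left hρ.le]
  rw [h2]
  have h3 : ∫ y in Ioi ρ, y ^ (2:ℕ) * y ^ (-e) = ∫ y in Ioi ρ, y ^ (2 - e) := by
    refine setIntegral_congr_fun measurableSet_Ioi (fun y hy => ?_)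
    have hy0 : (0:ℝ) < y := lt_trans hρ hy
    rw [← Real.rpow_natCast y 2, ← Real.rpow_add hy0]
    norm_num [sub_eq_add_neg]
  rw [h3, integral_Ioi_rpow_of_lt (by linarith) hρ]
  rw [show (2:ℝ) - e + 1 = 3 - e by ring]
  have he3 : e - 3 ≠ 0 := by intro h; rw [sub_eq_zero] at h; linarith
  have h4 : -ρ ^ (3 - e) / (3 - e) = ρ ^ (3 - e) / (e - 3) := by
    rw [div_eq_div_iff (by linarith : (3:ℝ) - e ≠ 0) he3]; ring
  rw [nsmul_eq_mul, smul_eq_mul, h4]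
  rw [measureReal_def]; ring

lemma oneDim_integrable {q : ℝ} (hq : q < -1) {r : ℝ} (hr : 1 ≤ r) :
    Integrable (fun t : ℝ => (|t| + r) ^ q) := by
  have hdim : (finrank ℝ ℝ : ℝ) < -q := by simp; linarith
  have hjb : Integrable (fun t : ℝ => (1 + ‖t‖) ^ (-(-q))) := integrable_one_add_norm hdim
  refine hjb.mono' ?_ (Filter.Eventually.of_forall fun t => ?_)
  · have hc : Continuous (fun t : ℝ => (|t| + r) ^ q) := by
      apply Continuous.rpow_const (continuous_abs.add continuous_const)
      intro t; left; exact ne_of_gt (show (0:ℝ) < |t| + r by linarith [abs_nonneg t])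
    exact hc.aestronglyMeasurable
  · rw [Real.norm_eq_abs, abs_of_nonneg (Real.rpow_nonneg (by positivity) _), neg_neg,
      Real.norm_eq_abs]
    exact Real.rpow_le_rpow_of_nonpos (by positivity) (by linarith) (by linarith)

lemma oneDim_integral {q : ℝ} (hq : q < -1) {r : ℝ} (hr : 0 < r) :
    ∫ t : ℝ, (|t| + r) ^ q = 2 * (-r ^ (q + 1) / (q + 1)) := by
  rw [integral_comp_abs (f := fun x => (x + r) ^ q)]
  have h1 : ∫ x in Ioi (0:ℝ), (x + r) ^ q = ∫ y in Ioi r, y ^ q := by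
    have hp : MeasurePreserving (fun x : ℝ => x + r) volume volume :=
      measurePreserving_add_right volume r
    have he : MeasurableEmbedding (fun x : ℝ => x + r) :=
      (Homeomorph.addRight r).measurableEmbedding
    have := hp.setIntegral_preimage_emb he (fun y => y ^ q) (Ioi r)
    have hpre : (fun x : ℝ => x + r) ⁻¹' Ioi r = Ioi 0 := by
      ext x; simp [Set.mem_Ioi]
    rw [hpre] at this
    exact this
  rw [h1, integral_Ioi_rpow_of_lt hq hr]

def VB : ℝ := (volume (Metric.ball (0:E3) 1)).toReal
def K8 : ℝ := 3 * VB / 5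
def K9 : ℝ := VB / 2

lemma VB_nonneg : 0 ≤ VB := ENNReal.toReal_nonneg
lemma K8_nonneg : 0 ≤ K8 := by unfold K8; linarith [VB_nonneg]
lemma K9_nonneg : 0 ≤ K9 := by unfold K9; linarith [VB_nonneg]

lemma ext8 {a : ℝ} (ha : 0 < a) :
    ∫ x in {x : E3 | a < ‖x‖}, ‖x‖ ^ (-(8:ℝ)) = K8 * a ^ (-(5:ℝ)) := by
  have h := ext_integral (e := 8) (by norm_num) ha
  rw [h, show (3:ℝ) - 8 = -(5:ℝ) by norm_num]
  unfold K8 VB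
  norm_num

lemma ext9 {a : ℝ} (ha : 0 < a) :
    ∫ x in {x : E3 | a < ‖x‖}, ‖x‖ ^ (-(9:ℝ)) = K9 * a ^ (-(6:ℝ)) := by
  have h := ext_integral (e := 9) (by norm_num) ha
  rw [h, show (3:ℝ) - 9 = -(6:ℝ) by norm_num]
  unfold K9 VB
  have : (9:ℝ) - 3 = 6 := by norm_num
  rw [this]
  ring

lemma W3_pow_le {x : E3} (hx : 0 < ‖x‖) : (W3 x)^4 ≤ ‖x‖ ^ (-(4:ℝ)) := by
  have hb : (0:ℝ) < 1/3 + ‖x‖^2 := by positivity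
  have h1 : (W3 x)^4 = (1/3 + ‖x‖^2) ^ (-(2:ℝ)) := by
    rw [W3, ← Real.rpow_natCast ((1/3 + ‖x‖^2) ^ (-(1:ℝ)/2)) 4, ← Real.rpow_mul hb.le]
    norm_num
  rw [h1]
  have h2 : (‖x‖^2 : ℝ) ^ (-(2:ℝ)) = ‖x‖ ^ (-(4:ℝ)) := by
    rw [← Real.rpow_natCast ‖x‖ 2, ← Real.rpow_mul (norm_nonneg x)]
    norm_num
  rw [← h2]
  exact Real.rpow_le_rpow_of_nonpos (by positivity) (by linarith) (by norm_num)

lemma pointwise_bound (G : ℝ → ℝ) (lam r₁ r₂ α β : ℝ)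
    (hlam : 0 < lam) (hr₁ : 1 ≤ r₁)
    (hα : 0 ≤ α) (hβ : 0 ≤ β)
    (hGiAbs : ∀ a b : ℝ, IntervalIntegrable (fun s => |G s|) volume a b)
    (habs : ∀ s : ℝ, 0 < s → s < lam → (∫ x in (-s)..s, |G x|) ≤ 2*α*s/Real.sqrt lam)
    (hb : ∀ s : ℝ, 0 < s → (∫ x in (-s)..s, |G x|) ≤ β * Real.sqrt s)
    (t : ℝ) (x : E3) (hx : (x, t) ∈ channel r₁ r₂) :
    |(W3 x)^4 * freeWave G x t| ≤ (4*α/Real.sqrt lam) * ‖x‖ ^ (-(4:ℝ))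
      + Set.indicator {y : E3 | lam ≤ 2*‖y‖}
          (fun y => Real.sqrt 2 * β * ‖y‖ ^ (-(9:ℝ)/2)) x := by
  obtain ⟨hxa, _⟩ := hx
  have ht : |t| < ‖x‖ := by
    simp only at hxa; linarith
  have hx1 : (1:ℝ) ≤ ‖x‖ := by
    simp only at hxa; linarith [abs_nonneg t]
  have hx0 : (0:ℝ) < ‖x‖ := lt_of_lt_of_le one_pos hx1
  set S := |t| + ‖x‖ with hS
  have hSpos : 0 < S := by positivity
  have hS2 : S ≤ 2 * ‖x‖ := by simp only [hS]; linarith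
  have hsqlam : 0 < Real.sqrt lam := Real.sqrt_pos.2 hlam
  have hIabs : |∫ s in (t - ‖x‖)..(t + ‖x‖), G s| ≤ ∫ s in (-S)..S, |G s| := by
    calc |∫ s in (t - ‖x‖)..(t + ‖x‖), G s|
        ≤ ∫ s in (t - ‖x‖)..(t + ‖x‖), |G s| :=
          intervalIntegral.abs_integral_le_integral_abs (by linarith)
      _ ≤ ∫ s in (-S)..S, |G s| := by
          apply intervalIntegral.integral_mono_interval (by simp only [hS]; linarith [neg_abs_le t])
            (by linarith) (by simp only [hS]; linarith [le_abs_self t])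
            (Filter.Eventually.of_forall fun s => abs_nonneg _) (hGiAbs _ _)
  have hW := W3_pow_le hx0
  have hWnn : (0:ℝ) ≤ (W3 x)^4 := by
    have : (0:ℝ) ≤ W3 x := Real.rpow_nonneg (by positivity) _
    positivity
  have habs_u : |(W3 x)^4 * freeWave G x t|
      ≤ ‖x‖ ^ (-(4:ℝ)) * (‖x‖⁻¹ * ∫ s in (-S)..S, |G s|) := by
    rw [abs_mul, abs_of_nonneg hWnn, freeWave, abs_mul, abs_of_nonneg (by positivity : (0:ℝ) ≤ ‖x‖⁻¹)]
    have hInn : (0:ℝ) ≤ ∫ s in (-S)..S, |G s| :=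
      intervalIntegral.integral_nonneg (by linarith) (fun s _ => abs_nonneg _)
    apply mul_le_mul hW (mul_le_mul_of_nonneg_left hIabs (by positivity)) (by positivity)
      (by positivity)
  rcases lt_or_ge S lam with hcase | hcase
  · -- near case
    have h1 := habs S hSpos hcase
    have key : |(W3 x)^4 * freeWave G x t| ≤ (4*α/Real.sqrt lam) * ‖x‖ ^ (-(4:ℝ)) := by
      have : ‖x‖⁻¹ * ∫ s in (-S)..S, |G s| ≤ 4*α/Real.sqrt lam := by
        have hle : ‖x‖⁻¹ * ∫ s in (-S)..S, |G s| ≤ ‖x‖⁻¹ * (2*α*S/Real.sqrt lam) := by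
          apply mul_le_mul_of_nonneg_left h1 (by positivity)
        refine le_trans hle ?_
        rw [show ‖x‖⁻¹ * (2*α*S/Real.sqrt lam) = (2*α/Real.sqrt lam) * (S/‖x‖) by
          rw [div_eq_mul_inv, div_eq_mul_inv, div_eq_mul_inv]; ring]
        have hSx : S / ‖x‖ ≤ 2 := by rw [div_le_iff₀ hx0]; linarith
        calc (2*α/Real.sqrt lam) * (S/‖x‖) ≤ (2*α/Real.sqrt lam) * 2 :=
              mul_le_mul_of_nonneg_left hSx (by positivity)
          _ = 4*α/Real.sqrt lam := by ring
      calc |(W3 x)^4 * freeWave G x t| ≤ ‖x‖ ^ (-(4:ℝ)) * (‖x‖⁻¹ * ∫ s in (-S)..S, |G s|) := habs_u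
        _ ≤ ‖x‖ ^ (-(4:ℝ)) * (4*α/Real.sqrt lam) :=
            mul_le_mul_of_nonneg_left this (by positivity)
        _ = (4*α/Real.sqrt lam) * ‖x‖ ^ (-(4:ℝ)) := by ring
    refine le_trans key (le_add_of_nonneg_right ?_)
    apply Set.indicator_nonneg
    intro y _; positivity
  · -- far case
    have h1 := hb S hSpos
    have hmem : x ∈ {y : E3 | lam ≤ 2*‖y‖} := by
      simp only [Set.mem_setOf_eq]; linarith
    rw [Set.indicator_of_mem hmem]
    have key : |(W3 x)^4 * freeWave G x t| ≤ Real.sqrt 2 * β * ‖x‖ ^ (-(9:ℝ)/2) := by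
      have hsqS : Real.sqrt S ≤ Real.sqrt 2 * Real.sqrt ‖x‖ := by
        rw [← Real.sqrt_mul (by norm_num : (0:ℝ) ≤ 2)]
        exact Real.sqrt_le_sqrt hS2
      have h2 : ‖x‖⁻¹ * ∫ s in (-S)..S, |G s| ≤ ‖x‖⁻¹ * (β * (Real.sqrt 2 * Real.sqrt ‖x‖)) := by
        apply mul_le_mul_of_nonneg_left _ (by positivity)
        exact le_trans h1 (mul_le_mul_of_nonneg_left hsqS hβ)
      calc |(W3 x)^4 * freeWave G x t|
          ≤ ‖x‖ ^ (-(4:ℝ)) * (‖x‖⁻¹ * ∫ s in (-S)..S, |G s|) := habs_u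
        _ ≤ ‖x‖ ^ (-(4:ℝ)) * (‖x‖⁻¹ * (β * (Real.sqrt 2 * Real.sqrt ‖x‖))) :=
            mul_le_mul_of_nonneg_left h2 (by positivity)
        _ = Real.sqrt 2 * β * (‖x‖ ^ (-(4:ℝ)) * ‖x‖⁻¹ * Real.sqrt ‖x‖) := by ring
        _ = Real.sqrt 2 * β * ‖x‖ ^ (-(9:ℝ)/2) := by
            congr 1
            rw [Real.sqrt_eq_rpow, ← Real.rpow_neg_one ‖x‖, ← Real.rpow_add hx0,
              ← Real.rpow_add hx0]
            norm_num
    refine le_trans key (le_add_of_nonneg_left ?_)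
    exact mul_nonneg (div_nonneg (by linarith) hsqlam.le) (Real.rpow_nonneg hx0.le _)

lemma inner_bound (G : ℝ → ℝ) (lam r₁ r₂ α β : ℝ)
    (hlam : 0 < lam) (hr₁ : 1 ≤ r₁)
    (hα : 0 ≤ α) (hβ : 0 ≤ β)
    (hGiAbs : ∀ a b : ℝ, IntervalIntegrable (fun s => |G s|) volume a b)
    (habs : ∀ s : ℝ, 0 < s → s < lam → (∫ x in (-s)..s, |G x|) ≤ 2*α*s/Real.sqrt lam)
    (hb : ∀ s : ℝ, 0 < s → (∫ x in (-s)..s, |G x|) ≤ β * Real.sqrt s)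
    (t : ℝ) :
    (∫ x in {x : E3 | (x, t) ∈ channel r₁ r₂}, ((W3 x)^4 * freeWave G x t)^2) ^ ((1:ℝ)/2)
      ≤ (4*Real.sqrt (2*K8) * α * lam ^ (-(1:ℝ)/2)) * (|t|+r₁) ^ (-(5:ℝ)/2)
        + (16*Real.sqrt K9 * β * lam ^ (-(3:ℝ)/2)) * (|t|+r₁) ^ (-(3:ℝ)/2) := by
  have hsqlam : 0 < Real.sqrt lam := Real.sqrt_pos.2 hlam
  set a := |t| + r₁ with ha_def
  have ha1 : 1 ≤ a := by simp only [ha_def]; linarith [abs_nonneg t]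
  have ha0 : 0 < a := lt_of_lt_of_le one_pos ha1
  set shell := {x : E3 | (x, t) ∈ channel r₁ r₂} with hsh_def
  have hshell_meas : MeasurableSet shell := by
    have : shell = {x : E3 | a < ‖x‖} ∩ {x : E3 | ‖x‖ < |t| + r₂} := by
      ext x; simp [hsh_def, channel, ha_def, Set.mem_setOf_eq]
    rw [this]
    exact (measurableSet_lt measurable_const measurable_norm).inter
      (measurableSet_lt measurable_norm measurable_const)
  have hsub : shell ⊆ {x : E3 | a < ‖x‖} := fun x hx => hx.1
  set c1 := 4*α/Real.sqrt lam with hc1_def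
  have hc1nn : 0 ≤ c1 := by positivity
  set ρ₀ := max (lam/4) a with hρ₀_def
  have hρ₀1 : 1 ≤ ρ₀ := le_trans ha1 (le_max_right _ _)
  have hρ₀0 : 0 < ρ₀ := lt_of_lt_of_le one_pos hρ₀1
  set F1 := fun x : E3 => c1^2 * ‖x‖ ^ (-(8:ℝ)) with hF1_def
  set F2 := fun x : E3 =>
    Set.indicator {y : E3 | ρ₀ < ‖y‖} (fun y => 2*β^2*‖y‖ ^ (-(9:ℝ))) x with hF2_def
  have hρ₀meas : MeasurableSet {y : E3 | ρ₀ < ‖y‖} :=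
    measurableSet_lt measurable_const measurable_norm
  have step1 : ∀ x ∈ shell, ((W3 x)^4 * freeWave G x t)^2 ≤ 2*F1 x + 2*F2 x := by
    intro x hx
    have hpw := pointwise_bound G lam r₁ r₂ α β hlam hr₁ hα hβ hGiAbs habs hb t x hx
    have hx0 : (0:ℝ) < ‖x‖ := by
      have : a < ‖x‖ := hsub hx
      linarith
    set P := c1 * ‖x‖ ^ (-(4:ℝ)) with hP_def
    set Q := Set.indicator {y : E3 | lam ≤ 2*‖y‖}
      (fun y => Real.sqrt 2 * β * ‖y‖ ^ (-(9:ℝ)/2)) x with hQ_def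
    have hPnn : 0 ≤ P := by positivity
    have hQnn : 0 ≤ Q := by
      apply Set.indicator_nonneg; intro y _; positivity
    have hsq : ((W3 x)^4 * freeWave G x t)^2 ≤ (P + Q)^2 := by
      rw [← sq_abs]
      exact pow_le_pow_left₀ (abs_nonneg _) hpw 2
    have hPsq : P^2 = F1 x := by
      rw [hP_def, hF1_def, mul_pow]
      congr 1
      rw [← Real.rpow_natCast (‖x‖ ^ (-(4:ℝ))) 2, ← Real.rpow_mul (norm_nonneg x)]
      norm_num
    have hQsq : Q^2 ≤ F2 x := by
      by_cases hm : x ∈ {y : E3 | lam ≤ 2*‖y‖}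
      · rw [hQ_def, Set.indicator_of_mem hm]
        have hx' : x ∈ {y : E3 | ρ₀ < ‖y‖} := by
          have h1 : a < ‖x‖ := hsub hx
          have h2 : lam ≤ 2*‖x‖ := hm
          simp only [Set.mem_setOf_eq, hρ₀_def, max_lt_iff]
          constructor <;> linarith
        simp only [hF2_def]
        rw [Set.indicator_of_mem hx']
        have : (Real.sqrt 2 * β * ‖x‖ ^ (-(9:ℝ)/2))^2 = 2*β^2*‖x‖ ^ (-(9:ℝ)) := by
          rw [mul_pow, mul_pow, Real.sq_sqrt (by norm_num : (0:ℝ) ≤ 2)]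
          congr 1
          rw [← Real.rpow_natCast (‖x‖ ^ (-(9:ℝ)/2)) 2, ← Real.rpow_mul (norm_nonneg x)]
          norm_num
        rw [this]
      · rw [hQ_def, Set.indicator_of_notMem hm]
        simp only [ne_eq, OfNat.ofNat_ne_zero, not_false_eq_true, zero_pow]
        apply Set.indicator_nonneg; intro y _; positivity
    calc ((W3 x)^4 * freeWave G x t)^2 ≤ (P + Q)^2 := hsq
      _ ≤ 2*P^2 + 2*Q^2 := by nlinarith [sq_nonneg (P - Q)]
      _ ≤ 2*F1 x + 2*F2 x := by rw [hPsq]; linarith [hQsq]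
  have hF1ext : IntegrableOn F1 {x : E3 | a < ‖x‖} := by
    simp only [hF1_def]
    exact (ext_integrableOn (by norm_num : (3:ℝ) < 8) ha1).const_mul _
  have hF1shell : IntegrableOn F1 shell := hF1ext.mono_set hsub
  have hF2glob : Integrable F2 := by
    rw [hF2_def, integrable_indicator_iff hρ₀meas]
    exact (ext_integrableOn (by norm_num : (3:ℝ) < 9) hρ₀1).const_mul _
  have hF2shell : IntegrableOn F2 shell := hF2glob.integrableOn
  have hF1nn : ∀ x, 0 ≤ F1 x := by
    intro x; simp only [hF1_def]; positivity
  have hF2nn : ∀ x, 0 ≤ F2 x := by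
    intro x; simp only [hF2_def]
    apply Set.indicator_nonneg; intro y _; positivity
  have step2 : (∫ x in shell, ((W3 x)^4 * freeWave G x t)^2)
      ≤ ∫ x in shell, (2*F1 x + 2*F2 x) := by
    apply integral_mono_of_nonneg
    · exact Filter.Eventually.of_forall fun x => sq_nonneg _
    · exact ((hF1shell.const_mul 2).add (hF2shell.const_mul 2))
    · exact (ae_restrict_iff' hshell_meas).2 (Filter.Eventually.of_forall step1)
  have step3 : ∫ x in shell, (2*F1 x + 2*F2 x)
      = 2 * (∫ x in shell, F1 x) + 2 * (∫ x in shell, F2 x) := by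
    rw [integral_add (hF1shell.const_mul 2) (hF2shell.const_mul 2),
      integral_const_mul, integral_const_mul]
    rw [integral_const_mul]
  have step4 : ∫ x in shell, F1 x ≤ c1^2 * (K8 * a ^ (-(5:ℝ))) := by
    have h1 : ∫ x in shell, F1 x ≤ ∫ x in {x : E3 | a < ‖x‖}, F1 x :=
      setIntegral_mono_set hF1ext (Filter.Eventually.of_forall hF1nn)
        (HasSubset.Subset.eventuallyLE hsub)
    rw [hF1_def] at h1 ⊢
    calc ∫ x in shell, c1^2 * ‖x‖ ^ (-(8:ℝ)) ≤ ∫ x in {x : E3 | a < ‖x‖}, c1^2 * ‖x‖ ^ (-(8:ℝ)) := h1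
      _ = c1^2 * ∫ x in {x : E3 | a < ‖x‖}, ‖x‖ ^ (-(8:ℝ)) := integral_const_mul _ _
      _ = c1^2 * (K8 * a ^ (-(5:ℝ))) := by rw [ext8 ha0]
  have step5 : ∫ x in shell, F2 x ≤ 2*β^2 * (K9 * ρ₀ ^ (-(6:ℝ))) := by
    have h1 : ∫ x in shell, F2 x ≤ ∫ x : E3, F2 x :=
      setIntegral_le_integral hF2glob (Filter.Eventually.of_forall hF2nn)
    calc ∫ x in shell, F2 x ≤ ∫ x : E3, F2 x := h1
      _ = ∫ x in {y : E3 | ρ₀ < ‖y‖}, 2*β^2*‖x‖ ^ (-(9:ℝ)) := by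
          rw [hF2_def, integral_indicator hρ₀meas]
      _ = 2*β^2 * ∫ x in {y : E3 | ρ₀ < ‖y‖}, ‖x‖ ^ (-(9:ℝ)) := by
          rw [← integral_const_mul]
      _ = 2*β^2 * (K9 * ρ₀ ^ (-(6:ℝ))) := by rw [ext9 hρ₀0]
  set p := Real.sqrt (2*K8) * c1 * a ^ (-(5:ℝ)/2) with hp_def
  set q := 2 * Real.sqrt K9 * β * ρ₀ ^ (-(3:ℝ)) with hq_def
  have hpnn : 0 ≤ p := by
    apply mul_nonneg (mul_nonneg (Real.sqrt_nonneg _) hc1nn) (Real.rpow_nonneg ha0.le _)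
  have hqnn : 0 ≤ q := by
    apply mul_nonneg (mul_nonneg (by positivity) hβ) (Real.rpow_nonneg hρ₀0.le _)
  have hpsq : p^2 = 2 * (c1^2 * (K8 * a ^ (-(5:ℝ)))) := by
    rw [hp_def, mul_pow, mul_pow, Real.sq_sqrt (by linarith [K8_nonneg] : (0:ℝ) ≤ 2*K8)]
    have : (a ^ (-(5:ℝ)/2))^2 = a ^ (-(5:ℝ)) := by
      rw [← Real.rpow_natCast (a ^ (-(5:ℝ)/2)) 2, ← Real.rpow_mul ha0.le]
      norm_num
    rw [this]; ring
  have hqsq : q^2 = 2 * (2*β^2 * (K9 * ρ₀ ^ (-(6:ℝ)))) := by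
    rw [hq_def, mul_pow, mul_pow, mul_pow, Real.sq_sqrt K9_nonneg]
    have : (ρ₀ ^ (-(3:ℝ)))^2 = ρ₀ ^ (-(6:ℝ)) := by
      rw [← Real.rpow_natCast (ρ₀ ^ (-(3:ℝ))) 2, ← Real.rpow_mul hρ₀0.le]
      norm_num
    rw [this]; ring
  have hmain : (∫ x in shell, ((W3 x)^4 * freeWave G x t)^2) ^ ((1:ℝ)/2) ≤ p + q := by
    have hnn : 0 ≤ ∫ x in shell, ((W3 x)^4 * freeWave G x t)^2 :=
      integral_nonneg fun x => sq_nonneg _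
    rw [← Real.sqrt_eq_rpow]
    have hle : (∫ x in shell, ((W3 x)^4 * freeWave G x t)^2) ≤ p^2 + q^2 := by
      rw [hpsq, hqsq]
      calc (∫ x in shell, ((W3 x)^4 * freeWave G x t)^2)
          ≤ ∫ x in shell, (2*F1 x + 2*F2 x) := step2
        _ = 2 * (∫ x in shell, F1 x) + 2 * (∫ x in shell, F2 x) := step3
        _ ≤ 2 * (c1^2 * (K8 * a ^ (-(5:ℝ)))) + 2 * (2*β^2 * (K9 * ρ₀ ^ (-(6:ℝ)))) := by
            have := step4; have := step5; linarith
    calc Real.sqrt (∫ x in shell, ((W3 x)^4 * freeWave G x t)^2)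
        ≤ Real.sqrt (p^2 + q^2) := Real.sqrt_le_sqrt hle
      _ ≤ Real.sqrt (p^2) + Real.sqrt (q^2) := sqrt_add_le' _ _ (sq_nonneg _) (sq_nonneg _)
      _ = p + q := by rw [Real.sqrt_sq hpnn, Real.sqrt_sq hqnn]
  have hp_eq : p = (4*Real.sqrt (2*K8) * α * lam ^ (-(1:ℝ)/2)) * a ^ (-(5:ℝ)/2) := by
    rw [hp_def, hc1_def]
    have hsq : lam ^ (-(1:ℝ)/2) = (Real.sqrt lam)⁻¹ := by
      rw [Real.sqrt_eq_rpow, ← Real.rpow_neg hlam.le]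
      norm_num
    rw [hsq, div_eq_mul_inv]
    ring
  have hq_le : q ≤ (16*Real.sqrt K9 * β * lam ^ (-(3:ℝ)/2)) * a ^ (-(3:ℝ)/2) := by
    have hsplit : ρ₀ ^ (-(3:ℝ)) = ρ₀ ^ (-(3:ℝ)/2) * ρ₀ ^ (-(3:ℝ)/2) := by
      rw [← Real.rpow_add hρ₀0]; norm_num
    have h1 : ρ₀ ^ (-(3:ℝ)/2) ≤ (lam/4) ^ (-(3:ℝ)/2) :=
      Real.rpow_le_rpow_of_nonpos (by linarith) (le_max_left _ _) (by norm_num)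
    have h2 : ρ₀ ^ (-(3:ℝ)/2) ≤ a ^ (-(3:ℝ)/2) :=
      Real.rpow_le_rpow_of_nonpos ha0 (le_max_right _ _) (by norm_num)
    have h3 : (lam/4) ^ (-(3:ℝ)/2) = 8 * lam ^ (-(3:ℝ)/2) := by
      rw [Real.div_rpow hlam.le (by norm_num : (0:ℝ) ≤ 4)]
      have h4 : (4:ℝ) ^ (-(3:ℝ)/2) = 8⁻¹ := by
        rw [show (4:ℝ) = 2^(2:ℕ) by norm_num, ← Real.rpow_natCast 2 2,
          ← Real.rpow_mul (by norm_num : (0:ℝ) ≤ 2)]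
        rw [show ((2:ℕ):ℝ) * (-(3:ℝ)/2) = -(3:ℝ) by push_cast; ring]
        rw [show (-(3:ℝ)) = -((3:ℕ):ℝ) by push_cast; ring, Real.rpow_neg (by norm_num : (0:ℝ) ≤ 2),
          Real.rpow_natCast]
        norm_num
      rw [h4, div_eq_mul_inv]
      ring
    have hρ32nn : 0 ≤ ρ₀ ^ (-(3:ℝ)/2) := Real.rpow_nonneg hρ₀0.le _
    have hkey : ρ₀ ^ (-(3:ℝ)) ≤ 8 * lam ^ (-(3:ℝ)/2) * a ^ (-(3:ℝ)/2) := by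
      rw [hsplit, ← h3]
      apply mul_le_mul h1 h2 hρ32nn (Real.rpow_nonneg (by linarith) _)
    calc q = 2 * Real.sqrt K9 * β * ρ₀ ^ (-(3:ℝ)) := hq_def
      _ ≤ 2 * Real.sqrt K9 * β * (8 * lam ^ (-(3:ℝ)/2) * a ^ (-(3:ℝ)/2)) :=
          mul_le_mul_of_nonneg_left hkey (by positivity)
      _ = (16*Real.sqrt K9 * β * lam ^ (-(3:ℝ)/2)) * a ^ (-(3:ℝ)/2) := by ring
  calc (∫ x in shell, ((W3 x)^4 * freeWave G x t)^2) ^ ((1:ℝ)/2) ≤ p + q := hmain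
    _ ≤ (4*Real.sqrt (2*K8) * α * lam ^ (-(1:ℝ)/2)) * a ^ (-(5:ℝ)/2)
        + (16*Real.sqrt K9 * β * lam ^ (-(3:ℝ)/2)) * a ^ (-(3:ℝ)/2) := by
        rw [← hp_eq]; linarith [hq_le]

end Stmt11Aux

open Stmt11Aux

set_option maxHeartbeats 1000000 in
theorem stmt11 :
    ∃ C : ℝ, 0 < C ∧ ∀ (G : ℝ → ℝ) (lam r₁ r₂ : ℝ),
      MemLp G 2 (volume : Measure ℝ) → 0 < lam →
      BddAbove (tauA G lam) → BddAbove (tauB G) →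
      1 ≤ r₁ → r₁ < r₂ → r₂ ≤ lam →
      L1L2 (channel r₁ r₂) (fun x t => (W3 x)^4 * freeWave G x t)
        ≤ C * tau G lam * lam ^ (-(1:ℝ)/2) * r₁ ^ (-(3:ℝ)/2) := by
  refine ⟨8*Real.sqrt (2*K8) + 64*Real.sqrt K9 + 1, by positivity, ?_⟩
  intro G lam r₁ r₂ hG hlam hA hB hr₁ hr12 hr₂
  have hr₁0 : (0:ℝ) < r₁ := lt_of_lt_of_le one_pos hr₁
  have hr₁lam : r₁ ≤ lam := le_trans hr12.le hr₂
  set α := Real.sqrt (sSup (tauA G lam)) with hα_def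
  set β := sSup (tauB G) with hβ_def
  have hα : 0 ≤ α := Real.sqrt_nonneg _
  have hGiAbs : ∀ a b : ℝ, IntervalIntegrable (fun s => |G s|) volume a b := by
    intro a b
    rw [intervalIntegrable_iff]
    have hfin : IsFiniteMeasure ((volume : Measure ℝ).restrict (Set.uIoc a b)) := by
      rw [Set.uIoc]; infer_instance
    exact ((hG.restrict _).integrable one_le_two).abs
  have hb : ∀ s : ℝ, 0 < s → (∫ x in (-s)..s, |G x|) ≤ β * Real.sqrt s := by
    intro s hs
    have h2 := le_csSup hB (⟨s, hs, rfl⟩ : ∃ r, 0 < r ∧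
      (∫ x in (-s)..s, |G x|) / Real.sqrt s = (∫ x in (-r)..r, |G x|) / Real.sqrt r)
    have hsq : 0 < Real.sqrt s := Real.sqrt_pos.2 hs
    calc (∫ x in (-s)..s, |G x|)
        = ((∫ x in (-s)..s, |G x|) / Real.sqrt s) * Real.sqrt s := by field_simp
      _ ≤ β * Real.sqrt s := mul_le_mul_of_nonneg_right h2 hsq.le
  have hβ : 0 ≤ β := by
    have h1 := le_csSup hB (⟨1, one_pos, rfl⟩ : ∃ r, 0 < r ∧
      (∫ x in (-(1:ℝ))..(1:ℝ), |G x|) / Real.sqrt 1 = (∫ x in (-r)..r, |G x|) / Real.sqrt r)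
    have h3 : 0 ≤ (∫ x in (-(1:ℝ))..(1:ℝ), |G x|) / Real.sqrt 1 :=
      div_nonneg (intervalIntegral.integral_nonneg (by norm_num) fun s _ => abs_nonneg _)
        (Real.sqrt_nonneg _)
    linarith
  have hsupA : 0 ≤ sSup (tauA G lam) := by
    have hmem : ((lam/(lam/2)) * ∫ x in (-(lam/2))..(lam/2), (G x)^2) ∈ tauA G lam :=
      ⟨lam/2, by linarith, by linarith, rfl⟩
    have h2 := le_csSup hA hmem
    have h3 : 0 ≤ (lam/(lam/2)) * ∫ x in (-(lam/2))..(lam/2), (G x)^2 :=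
      mul_nonneg (by positivity)
        (intervalIntegral.integral_nonneg (by linarith) fun s _ => sq_nonneg _)
    linarith
  have hα2 : α^2 = sSup (tauA G lam) := Real.sq_sqrt hsupA
  have ha2 : ∀ s : ℝ, 0 < s → s < lam → (∫ x in (-s)..s, (G x)^2) ≤ α^2 * s / lam := by
    intro s hs hsl
    have hmem : ((lam/s) * ∫ x in (-s)..s, (G x)^2) ∈ tauA G lam := ⟨s, hs, hsl, rfl⟩
    have h2 := le_csSup hA hmem
    calc (∫ x in (-s)..s, (G x)^2)
        = (s/lam) * ((lam/s) * ∫ x in (-s)..s, (G x)^2) := by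
          field_simp
      _ ≤ (s/lam) * sSup (tauA G lam) := mul_le_mul_of_nonneg_left h2 (by positivity)
      _ = α^2 * s / lam := by rw [hα2]; ring
  have hGsqInt : ∀ u v : ℝ, IntervalIntegrable (fun x => (G x)^2) volume u v :=
    fun u v => hG.integrable_sq.intervalIntegrable
  have habs : ∀ s : ℝ, 0 < s → s < lam →
      (∫ x in (-s)..s, |G x|) ≤ 2*α*s/Real.sqrt lam := by
    intro s hs hsl
    have hsqlam : 0 < Real.sqrt lam := Real.sqrt_pos.2 hlam
    by_cases hα0 : α = 0
    · have h0 : (∫ x in (-s)..s, (G x)^2) ≤ 0 := by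
        have := ha2 s hs hsl; rw [hα0] at this; simpa using this
      have hnn : 0 ≤ ∫ x in (-s)..s, (G x)^2 :=
        intervalIntegral.integral_nonneg (by linarith) fun x _ => sq_nonneg _
      have heq : (∫ x in (-s)..s, (G x)^2) = 0 := le_antisymm h0 hnn
      rw [intervalIntegral.integral_of_le (by linarith : -s ≤ s)] at heq
      have hi : IntegrableOn (fun x => (G x)^2) (Ioc (-s) s) volume :=
        hG.integrable_sq.integrableOn
      have hz := (integral_eq_zero_iff_of_nonneg
        (fun x => sq_nonneg (G x)) hi).mp heq
      have hzz : (fun x => |G x|) =ᵐ[volume.restrict (Ioc (-s) s)] 0 := by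
        filter_upwards [hz] with x hx
        have hx0 : (G x)^2 = 0 := hx
        have : G x = 0 := pow_eq_zero_iff (by norm_num) |>.mp hx0
        simp [this]
      rw [intervalIntegral.integral_of_le (by linarith : -s ≤ s), integral_congr_ae hzz]
      simp only [Pi.zero_apply, integral_zero]
      positivity
    · have hαpos : 0 < α := lt_of_le_of_ne hα (Ne.symm hα0)
      set c := α / Real.sqrt lam with hc_def
      have hcpos : 0 < c := div_pos hαpos hsqlam
      have hpt : ∀ x ∈ Set.Icc (-s) s, |G x| ≤ c/2 + (G x)^2/(2*c) := by
        intro x _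
        have h := sq_nonneg (|G x| - c)
        have h2 : (|G x|)^2 = (G x)^2 := sq_abs _
        rw [div_add_div _ _ (by norm_num) (by positivity), le_div_iff₀ (by positivity)]
        nlinarith
      have hint2 : IntervalIntegrable (fun x => c/2 + (G x)^2/(2*c)) volume (-s) s := by
        apply IntervalIntegrable.add intervalIntegrable_const
        exact (hGsqInt (-s) s).div_const _
      have h1 : (∫ x in (-s)..s, |G x|) ≤ ∫ x in (-s)..s, (c/2 + (G x)^2/(2*c)) :=
        intervalIntegral.integral_mono_on (by linarith) (hGiAbs _ _) hint2 hpt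
      have h2a : (∫ _x in (-s)..s, c/2) = c/2*(2*s) := by
        rw [intervalIntegral.integral_const, smul_eq_mul]; ring
      have h2b : (∫ x in (-s)..s, (G x)^2/(2*c)) = (∫ x in (-s)..s, (G x)^2)/(2*c) :=
        intervalIntegral.integral_div _ _
      have h2 : (∫ x in (-s)..s, (c/2 + (G x)^2/(2*c)))
          = c/2 * (2*s) + (∫ x in (-s)..s, (G x)^2)/(2*c) := by
        rw [intervalIntegral.integral_add intervalIntegrable_const
          ((hGsqInt (-s) s).div_const _), h2a, h2b]
      have h3 : (∫ x in (-s)..s, (G x)^2)/(2*c) ≤ (α^2*s/lam)/(2*c) := by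
        gcongr
        exact ha2 s hs hsl
      have hL : Real.sqrt lam * Real.sqrt lam = lam := Real.mul_self_sqrt hlam.le
      have e1 : c/2*(2*s) = α*s/Real.sqrt lam := by
        rw [hc_def]; ring
      have e2 : (α^2*s/lam)/(2*c) = α*s/(2*Real.sqrt lam) := by
        rw [hc_def, ← hL]
        have hL0 : Real.sqrt lam ≠ 0 := ne_of_gt hsqlam
        have hα0' : α ≠ 0 := ne_of_gt hαpos
        field_simp
        simp only [Real.sqrt_mul_self hsqlam.le, Real.sqrt_sq hsqlam.le]
      have e3 : α*s/(2*Real.sqrt lam) ≤ α*s/Real.sqrt lam := by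
        apply div_le_div_of_nonneg_left (by positivity) hsqlam
        linarith
      have e4 : 2*α*s/Real.sqrt lam = α*s/Real.sqrt lam + α*s/Real.sqrt lam := by
        ring
      calc (∫ x in (-s)..s, |G x|) ≤ ∫ x in (-s)..s, (c/2 + (G x)^2/(2*c)) := h1
        _ = c/2 * (2*s) + (∫ x in (-s)..s, (G x)^2)/(2*c) := h2
        _ ≤ α*s/Real.sqrt lam + α*s/(2*Real.sqrt lam) := by
            rw [← e1, ← e2]; linarith
        _ ≤ 2*α*s/Real.sqrt lam := by rw [e4]; linarith
  -- outer integral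
  set D1 := 4*Real.sqrt (2*K8) * α * lam ^ (-(1:ℝ)/2) with hD1_def
  set D2 := 16*Real.sqrt K9 * β * lam ^ (-(3:ℝ)/2) with hD2_def
  have hD1nn : 0 ≤ D1 := by
    apply mul_nonneg (mul_nonneg (by positivity) hα) (Real.rpow_nonneg hlam.le _)
  have hD2nn : 0 ≤ D2 := by
    apply mul_nonneg (mul_nonneg (by positivity) hβ) (Real.rpow_nonneg hlam.le _)
  have hint1 : Integrable (fun t : ℝ => (|t| + r₁) ^ (-(5:ℝ)/2)) :=
    oneDim_integrable (by norm_num) hr₁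
  have hint2 : Integrable (fun t : ℝ => (|t| + r₁) ^ (-(3:ℝ)/2)) :=
    oneDim_integrable (by norm_num) hr₁
  have hkey : ∀ t : ℝ,
      (∫ x in {x : E3 | (x,t) ∈ channel r₁ r₂}, ((W3 x)^4 * freeWave G x t)^2) ^ ((1:ℝ)/2)
        ≤ D1 * (|t|+r₁)^(-(5:ℝ)/2) + D2*(|t|+r₁)^(-(3:ℝ)/2) :=
    fun t => inner_bound G lam r₁ r₂ α β hlam hr₁ hα hβ hGiAbs habs hb t
  have hL1 : L1L2 (channel r₁ r₂) (fun x t => (W3 x)^4 * freeWave G x t)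
      ≤ ∫ t : ℝ, (D1 * (|t|+r₁)^(-(5:ℝ)/2) + D2*(|t|+r₁)^(-(3:ℝ)/2)) := by
    rw [L1L2]
    apply integral_mono_of_nonneg
    · exact Filter.Eventually.of_forall fun t =>
        Real.rpow_nonneg (integral_nonneg fun x => sq_nonneg _) _
    · exact (hint1.const_mul D1).add (hint2.const_mul D2)
    · exact Filter.Eventually.of_forall fun t => hkey t
  have hval : (∫ t : ℝ, (D1 * (|t|+r₁)^(-(5:ℝ)/2) + D2*(|t|+r₁)^(-(3:ℝ)/2)))
      ≤ 2*D1*r₁^(-(3:ℝ)/2) + 4*D2*r₁^(-(1:ℝ)/2) := by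
    rw [integral_add (hint1.const_mul D1) (hint2.const_mul D2), integral_const_mul,
      integral_const_mul, oneDim_integral (by norm_num) hr₁0, oneDim_integral (by norm_num) hr₁0,
      show (-(5:ℝ)/2 + 1) = -(3:ℝ)/2 by norm_num, show (-(3:ℝ)/2 + 1) = -(1:ℝ)/2 by norm_num]
    have hx1 : 0 ≤ r₁ ^ (-(3:ℝ)/2) := Real.rpow_nonneg hr₁0.le _
    have hx2 : 0 ≤ r₁ ^ (-(1:ℝ)/2) := Real.rpow_nonneg hr₁0.le _
    have q1 : 2 * (-r₁ ^ (-(3:ℝ)/2) / (-(3:ℝ)/2)) = (4/3)*r₁ ^ (-(3:ℝ)/2) := by ring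
    have q2 : 2 * (-r₁ ^ (-(1:ℝ)/2) / (-(1:ℝ)/2)) = 4*r₁ ^ (-(1:ℝ)/2) := by ring
    rw [q1, q2]
    nlinarith [mul_nonneg hD1nn hx1, mul_nonneg hD2nn hx2]
  have hswap : lam^(-(3:ℝ)/2) * r₁^(-(1:ℝ)/2) ≤ lam^(-(1:ℝ)/2) * r₁^(-(3:ℝ)/2) := by
    have e1 : lam^(-(3:ℝ)/2) = lam^(-(1:ℝ)/2) * lam^(-(1:ℝ)) := by
      rw [← Real.rpow_add hlam]; norm_num
    have e2 : r₁^(-(3:ℝ)/2) = r₁^(-(1:ℝ)/2) * r₁^(-(1:ℝ)) := by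
      rw [← Real.rpow_add hr₁0]; norm_num
    have e3 : lam^(-(1:ℝ)) ≤ r₁^(-(1:ℝ)) :=
      Real.rpow_le_rpow_of_nonpos hr₁0 hr₁lam (by norm_num)
    have h0 : 0 ≤ lam^(-(1:ℝ)/2) := Real.rpow_nonneg hlam.le _
    have h1 : 0 ≤ r₁^(-(1:ℝ)/2) := Real.rpow_nonneg hr₁0.le _
    calc lam^(-(3:ℝ)/2) * r₁^(-(1:ℝ)/2)
        = lam^(-(1:ℝ)/2) * lam^(-(1:ℝ)) * r₁^(-(1:ℝ)/2) := by rw [e1]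
      _ ≤ lam^(-(1:ℝ)/2) * r₁^(-(1:ℝ)) * r₁^(-(1:ℝ)/2) := by
          apply mul_le_mul_of_nonneg_right _ h1
          exact mul_le_mul_of_nonneg_left e3 h0
      _ = lam^(-(1:ℝ)/2) * r₁^(-(3:ℝ)/2) := by rw [e2]; ring
  have htau : tau G lam = α + β := rfl
  have hfinal : 2*D1*r₁^(-(3:ℝ)/2) + 4*D2*r₁^(-(1:ℝ)/2)
      ≤ (8*Real.sqrt (2*K8) + 64*Real.sqrt K9 + 1) * tau G lam
        * lam ^ (-(1:ℝ)/2) * r₁ ^ (-(3:ℝ)/2) := by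
    rw [htau, hD1_def, hD2_def]
    have hs8 : 0 ≤ Real.sqrt (2*K8) := Real.sqrt_nonneg _
    have hs9 : 0 ≤ Real.sqrt K9 := Real.sqrt_nonneg _
    have hY1nn : 0 ≤ lam^(-(1:ℝ)/2) * r₁^(-(3:ℝ)/2) :=
      mul_nonneg (Real.rpow_nonneg hlam.le _) (Real.rpow_nonneg hr₁0.le _)
    have hstep : 64*Real.sqrt K9*β*(lam^(-(3:ℝ)/2) * r₁^(-(1:ℝ)/2))
        ≤ 64*Real.sqrt K9*β*(lam^(-(1:ℝ)/2) * r₁^(-(3:ℝ)/2)) :=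
      mul_le_mul_of_nonneg_left hswap (by positivity)
    calc 2*(4*Real.sqrt (2*K8)*α*lam^(-(1:ℝ)/2))*r₁^(-(3:ℝ)/2)
          + 4*(16*Real.sqrt K9*β*lam^(-(3:ℝ)/2))*r₁^(-(1:ℝ)/2)
        = 8*Real.sqrt (2*K8)*α*(lam^(-(1:ℝ)/2) * r₁^(-(3:ℝ)/2))
          + 64*Real.sqrt K9*β*(lam^(-(3:ℝ)/2) * r₁^(-(1:ℝ)/2)) := by ring
      _ ≤ 8*Real.sqrt (2*K8)*α*(lam^(-(1:ℝ)/2) * r₁^(-(3:ℝ)/2))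
          + 64*Real.sqrt K9*β*(lam^(-(1:ℝ)/2) * r₁^(-(3:ℝ)/2)) := by linarith
      _ ≤ (8*Real.sqrt (2*K8) + 64*Real.sqrt K9 + 1) * (α+β)
          * (lam ^ (-(1:ℝ)/2) * r₁ ^ (-(3:ℝ)/2)) := by
          nlinarith [mul_nonneg (mul_nonneg hs8 hβ) hY1nn,
            mul_nonneg (mul_nonneg hs9 hα) hY1nn,
            mul_nonneg hα hY1nn, mul_nonneg hβ hY1nn]
      _ = (8*Real.sqrt (2*K8) + 64*Real.sqrt K9 + 1) * (α+β)
          * lam ^ (-(1:ℝ)/2) * r₁ ^ (-(3:ℝ)/2) := by ring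
  calc L1L2 (channel r₁ r₂) (fun x t => (W3 x)^4 * freeWave G x t)
      ≤ ∫ t : ℝ, (D1 * (|t|+r₁)^(-(5:ℝ)/2) + D2*(|t|+r₁)^(-(3:ℝ)/2)) := hL1
    _ ≤ 2*D1*r₁^(-(3:ℝ)/2) + 4*D2*r₁^(-(1:ℝ)/2) := hval
    _ ≤ (8*Real.sqrt (2*K8) + 64*Real.sqrt K9 + 1) * tau G lam
        * lam ^ (-(1:ℝ)/2) * r₁ ^ (-(3:ℝ)/2) := hfinal
end
end

section
/- There is an absolute constant C > 0 with the following property. Let G ∈ L²(ℝ), let λ > 2, and suppose τ = (sup_{0<r<λ} (λ/r)·∫_{−r}^{r} |G(s)|² ds)^(1/2) + sup_{r>0} r^(−1/2)·∫_{−r}^{r} |G(s)| ds is finite. Then for all 0 ≤ r₁ < r₂ ≤ 2, the associated radial free wave v_L satisfies ‖χ_{Ω_{r₁,r₂}} W⁴·v_L‖_{L¹L²} ≤ C · τ · λ^(−1/2) · (r₂ − r₁)^(1/2). -/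
open MeasureTheory Real Set

noncomputable section

lemma intOnAbs {G : ℝ → ℝ} (hG : MemLp G 2 (volume : Measure ℝ)) (a b : ℝ) :
    IntegrableOn (fun s => |G s|) (Set.Ioc a b) volume := by
  have h2 : IntegrableOn (fun s => ((G s)^2 + 1)/2) (Set.Ioc a b) volume :=
    ((hG.integrable_sq.integrableOn).add
      (integrableOn_const measure_Ioc_lt_top.ne)).div_const 2
  refine Integrable.mono h2 ?_ ?_
  · exact (hG.aestronglyMeasurable.norm).restrict.congr
      (Filter.Eventually.of_forall fun s => (Real.norm_eq_abs (G s)))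
  · refine Filter.Eventually.of_forall fun s => ?_
    rw [Real.norm_eq_abs, Real.norm_eq_abs, abs_abs]
    have h1 : (0:ℝ) ≤ (G s ^ 2 + 1)/2 := by positivity
    rw [abs_of_nonneg h1]
    nlinarith [sq_abs (G s), sq_nonneg (|G s| - 1), abs_nonneg (G s)]

lemma Bnonneg {G : ℝ → ℝ} (hB : BddAbove (tauB G)) : 0 ≤ sSup (tauB G) := by
  refine le_trans ?_ (le_csSup hB ⟨1, one_pos, rfl⟩)
  have : 0 ≤ ∫ s in (-1:ℝ)..1, |G s| :=
    intervalIntegral.integral_nonneg (by norm_num) (fun u _ => abs_nonneg _)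
  positivity

lemma Bbound {G : ℝ → ℝ} (hB : BddAbove (tauB G)) {r : ℝ} (hr : 0 < r) :
    ∫ s in (-r)..r, |G s| ≤ sSup (tauB G) * Real.sqrt r := by
  have h := le_csSup hB (⟨r, hr, rfl⟩ : (∫ s in (-r)..r, |G s|) / Real.sqrt r ∈ tauB G)
  have hs : 0 < Real.sqrt r := Real.sqrt_pos.2 hr
  calc ∫ s in (-r)..r, |G s| = ((∫ s in (-r)..r, |G s|) / Real.sqrt r) * Real.sqrt r := by
        field_simp
    _ ≤ sSup (tauB G) * Real.sqrt r := by
        exact mul_le_mul_of_nonneg_right h hs.le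

lemma Abound {G : ℝ → ℝ} {lam : ℝ} (hG : MemLp G 2 (volume : Measure ℝ))
    (hlam : 2 < lam) (hA : BddAbove (tauA G lam)) {r : ℝ} (hr : 0 < r) (hrl : r < lam) :
    ∫ s in (-r)..r, |G s| ≤ 2 * Real.sqrt (sSup (tauA G lam)) * r / Real.sqrt lam := by
  set A := sSup (tauA G lam) with hAdef
  have hlam0 : (0:ℝ) < lam := by linarith
  have hA0 : 0 ≤ A := by
    refine le_trans ?_ (le_csSup hA ⟨1, one_pos, by linarith, rfl⟩)
    have h1 : 0 ≤ ∫ s in (-1:ℝ)..1, (G s)^2 :=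
      intervalIntegral.integral_nonneg (by norm_num) (fun u _ => sq_nonneg _)
    positivity
  have hrr : -r ≤ r := by linarith
  -- bound on ∫ G²
  have hsq : ∫ s in (-r)..r, (G s)^2 ≤ A * r / lam := by
    have h := le_csSup hA (⟨r, hr, hrl, rfl⟩ :
      (lam / r) * ∫ s in (-r)..r, (G s)^2 ∈ tauA G lam)
    rw [div_mul_eq_mul_div, div_le_iff₀ hr, ← hAdef] at h
    rw [le_div_iff₀ hlam0]
    linarith
  -- interval integrability
  have hIabs : IntervalIntegrable (fun s => |G s|) volume (-r) r :=
    (intervalIntegrable_iff_integrableOn_Ioc_of_le hrr).2 (intOnAbs hG _ _)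
  have hIsq : IntervalIntegrable (fun s => (G s)^2) volume (-r) r :=
    hG.integrable_sq.intervalIntegrable
  -- AM-GM bound for each c > 0
  have key : ∀ c : ℝ, 0 < c → ∫ s in (-r)..r, |G s| ≤ c/2 * (A * r / lam) + r / c := by
    intro c hc
    have hmono : ∫ s in (-r)..r, |G s| ≤ ∫ s in (-r)..r, (c/2 * (G s)^2 + 1/(2*c)) := by
      refine intervalIntegral.integral_mono_on hrr hIabs ?_ fun s _ => ?_
      · exact ((hIsq.const_mul (c/2)).add intervalIntegrable_const)
      · have h2 : 2*c*|G s| ≤ c^2*(G s)^2 + 1 := by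
          nlinarith [sq_nonneg (c*|G s| - 1), sq_abs (G s)]
        calc |G s| = (2*c*|G s|)/(2*c) := by field_simp
          _ ≤ (c^2*(G s)^2+1)/(2*c) := by gcongr
          _ = c/2*(G s)^2 + 1/(2*c) := by field_simp
    have hval : ∫ s in (-r)..r, (c/2 * (G s)^2 + 1/(2*c))
        = c/2 * (∫ s in (-r)..r, (G s)^2) + r / c := by
      rw [intervalIntegral.integral_add (hIsq.const_mul (c/2)) intervalIntegrable_const,
        intervalIntegral.integral_const_mul, intervalIntegral.integral_const]
      have : (r - -r) = 2*r := by ring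
      rw [this, smul_eq_mul]
      field_simp
    rw [hval] at hmono
    have : c/2 * (∫ s in (-r)..r, (G s)^2) ≤ c/2 * (A * r / lam) :=
      mul_le_mul_of_nonneg_left hsq (by positivity)
    linarith
  rcases eq_or_lt_of_le hA0 with h0 | hApos
  · -- A = 0
    have hz : ∫ s in (-r)..r, |G s| ≤ 0 := by
      by_contra hcon
      push_neg at hcon
      set I := ∫ s in (-r)..r, |G s| with hI
      have h1 := key (2*r/I) (by positivity)
      rw [← h0] at h1
      have : r / (2*r/I) = I/2 := by field_simp
      rw [this] at h1
      simp at h1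
      linarith
    have hge : 0 ≤ ∫ s in (-r)..r, |G s| :=
      intervalIntegral.integral_nonneg hrr (fun u _ => abs_nonneg _)
    have hrhs : 0 ≤ 2 * Real.sqrt A * r / Real.sqrt lam := by positivity
    linarith
  · -- A > 0
    set sa := Real.sqrt A with hsa
    set sl := Real.sqrt lam with hsl
    have hsa0 : 0 < sa := Real.sqrt_pos.2 hApos
    have hsl0 : 0 < sl := Real.sqrt_pos.2 hlam0
    have hsa2 : sa^2 = A := Real.sq_sqrt hA0
    have hsl2 : sl^2 = lam := Real.sq_sqrt hlam0.le
    have h1 := key (sl/sa) (by positivity)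
    have heq : (sl/sa)/2 * (A * r / lam) + r / (sl/sa) = (3/2) * sa * r / sl := by
      rw [← hsa2, ← hsl2]; field_simp; ring
    rw [heq] at h1
    have : (3/2) * sa * r / sl ≤ 2 * sa * r / sl := by
      gcongr
      nlinarith
    linarith

lemma vbound {G : ℝ → ℝ} {lam r₁ r₂ : ℝ} (hG : MemLp G 2 (volume : Measure ℝ))
    (hlam : 2 < lam) (hA : BddAbove (tauA G lam)) (hB : BddAbove (tauB G))
    (hr₁ : 0 ≤ r₁) {x : EuclideanSpace ℝ (Fin 3)} {t : ℝ}
    (hx : (x, t) ∈ channel r₁ r₂) :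
    |freeWave G x t| ≤ 4 * tau G lam / Real.sqrt lam := by
  obtain ⟨h1, h2⟩ := hx
  simp only at h1 h2
  set R := ‖x‖ with hR
  have htR : |t| < R := by linarith [abs_nonneg t]
  have hR0 : 0 < R := lt_of_le_of_lt (abs_nonneg t) htR
  set r' := |t| + R with hr'
  have hr'0 : 0 < r' := by positivity
  have hr'R : r' ≤ 2 * R := by simp only [hr']; linarith
  have hlam0 : (0:ℝ) < lam := by linarith
  have hsl0 : 0 < Real.sqrt lam := Real.sqrt_pos.2 hlam0
  have hsub : Set.Ioc (t - R) (t + R) ⊆ Set.Ioc (-r') r' := by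
    apply Set.Ioc_subset_Ioc
    · cases abs_cases t with
      | inl h => simp only [hr']; linarith [h.1]
      | inr h => simp only [hr']; linarith [h.1]
    · cases abs_cases t with
      | inl h => simp only [hr']; linarith [h.1]
      | inr h => simp only [hr']; linarith [h.1]
  have hab : t - R ≤ t + R := by linarith
  have step1 : |∫ s in (t - R)..(t + R), G s| ≤ ∫ s in (-r')..r', |G s| := by
    calc |∫ s in (t - R)..(t + R), G s| ≤ ∫ s in (t - R)..(t + R), |G s| :=
          intervalIntegral.abs_integral_le_integral_abs hab
      _ = ∫ s in Set.Ioc (t - R) (t + R), |G s| := intervalIntegral.integral_of_le hab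
      _ ≤ ∫ s in Set.Ioc (-r') r', |G s| := by
          refine setIntegral_mono_set (intOnAbs hG _ _) ?_ hsub.eventuallyLE
          exact Filter.Eventually.of_forall fun s => abs_nonneg _
      _ = ∫ s in (-r')..r', |G s| := (intervalIntegral.integral_of_le (by linarith)).symm
  have habs : |freeWave G x t| ≤ R⁻¹ * ∫ s in (-r')..r', |G s| := by
    rw [freeWave, abs_mul, abs_inv, abs_of_nonneg hR0.le]
    exact mul_le_mul_of_nonneg_left step1 (by positivity)
  have hBnn := Bnonneg hB
  have hAnn : 0 ≤ Real.sqrt (sSup (tauA G lam)) := Real.sqrt_nonneg _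
  rcases lt_or_ge r' lam with hcase | hcase
  · -- use A bound
    have h3 := Abound hG hlam hA hr'0 hcase
    have : R⁻¹ * ∫ s in (-r')..r', |G s|
        ≤ R⁻¹ * (2 * Real.sqrt (sSup (tauA G lam)) * r' / Real.sqrt lam) :=
      mul_le_mul_of_nonneg_left h3 (by positivity)
    refine le_trans habs (le_trans this ?_)
    rw [tau]
    have hr2 : r' / R ≤ 2 := by rw [div_le_iff₀ hR0]; linarith
    have heq : R⁻¹ * (2 * Real.sqrt (sSup (tauA G lam)) * r' / Real.sqrt lam)
        = (2 * Real.sqrt (sSup (tauA G lam)) * (r' / R)) / Real.sqrt lam := by ring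
    rw [heq, div_le_div_iff_of_pos_right hsl0]
    nlinarith [mul_le_mul_of_nonneg_left hr2 hAnn]
  · -- use B bound
    have h3 := Bbound hB hr'0
    have hmul : R⁻¹ * ∫ s in (-r')..r', |G s|
        ≤ R⁻¹ * (sSup (tauB G) * Real.sqrt r') :=
      mul_le_mul_of_nonneg_left h3 (by positivity)
    refine le_trans habs (le_trans hmul ?_)
    rw [tau]
    have h4 : Real.sqrt lam ≤ Real.sqrt r' := Real.sqrt_le_sqrt hcase
    have h5 : Real.sqrt r' * Real.sqrt r' = r' := Real.mul_self_sqrt hr'0.le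
    have e1 : Real.sqrt r' * Real.sqrt lam ≤ 2 * R := by
      nlinarith [mul_le_mul_of_nonneg_left h4 (Real.sqrt_nonneg r')]
    have heq : R⁻¹ * (sSup (tauB G) * Real.sqrt r')
        = (sSup (tauB G) * Real.sqrt r') / R := by ring
    rw [heq, div_le_div_iff₀ hR0 hsl0]
    nlinarith [mul_le_mul_of_nonneg_left e1 hBnn, mul_nonneg hAnn hR0.le,
      mul_nonneg hBnn hR0.le]

lemma W3pow (x : EuclideanSpace ℝ (Fin 3)) : (W3 x)^4 = ((1/3 + ‖x‖^2)^2)⁻¹ := by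
  have hy : (0:ℝ) < 1/3 + ‖x‖^2 := by positivity
  rw [W3]
  rw [← Real.rpow_natCast ((1/3 + ‖x‖^2) ^ (-(1:ℝ)/2)) 4, ← Real.rpow_mul hy.le]
  norm_num

lemma volBound (t r₁ r₂ : ℝ) (hr₁ : 0 ≤ r₁) (h12 : r₁ < r₂) (hr₂ : r₂ ≤ 2) :
    (volume {x : EuclideanSpace ℝ (Fin 3) | |t| + r₁ < ‖x‖ ∧ ‖x‖ < |t| + r₂}).toReal
      ≤ (volume (Metric.ball (0:EuclideanSpace ℝ (Fin 3)) 1)).toReal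
        * (3*(r₂-r₁)*(|t|+2)^2) := by
  set a := |t| + r₁ with hadef
  set b := |t| + r₂ with hbdef
  have ha : 0 ≤ a := by positivity
  have hab : a < b := by simp only [hadef, hbdef]; linarith
  have hb : 0 ≤ b := by linarith
  have hb2 : b ≤ |t| + 2 := by simp only [hbdef]; linarith
  set m := volume (Metric.ball (0:EuclideanSpace ℝ (Fin 3)) 1) with hmdef
  have hmfin : m ≠ ⊤ := measure_ball_lt_top.ne
  have hsub : {x : EuclideanSpace ℝ (Fin 3) | a < ‖x‖ ∧ ‖x‖ < b}
      ⊆ Metric.ball 0 b \ Metric.closedBall 0 a := by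
    intro x hx
    refine ⟨mem_ball_zero_iff.2 hx.2, fun hc => ?_⟩
    exact absurd (mem_closedBall_zero_iff.1 hc) (not_le.2 hx.1)
  have hball : volume (Metric.ball (0:EuclideanSpace ℝ (Fin 3)) b)
      = ENNReal.ofReal (b^3) * m := by
    rw [Measure.addHaar_ball _ _ hb, finrank_euclideanSpace_fin]
  have hcball : volume (Metric.closedBall (0:EuclideanSpace ℝ (Fin 3)) a)
      = ENNReal.ofReal (a^3) * m := by
    rw [Measure.addHaar_closedBall _ _ ha, finrank_euclideanSpace_fin]
  have hdiff : volume (Metric.ball (0:EuclideanSpace ℝ (Fin 3)) b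
      \ Metric.closedBall 0 a)
      = ENNReal.ofReal (b^3) * m - ENNReal.ofReal (a^3) * m := by
    have hfin : volume (Metric.closedBall (0:EuclideanSpace ℝ (Fin 3)) a) ≠ ⊤ :=
      measure_closedBall_lt_top.ne
    have hd : volume (Metric.ball (0:EuclideanSpace ℝ (Fin 3)) b \ Metric.closedBall 0 a)
        = volume (Metric.ball (0:EuclideanSpace ℝ (Fin 3)) b)
          - volume (Metric.closedBall (0:EuclideanSpace ℝ (Fin 3)) a) :=
      measure_diff (Metric.closedBall_subset_ball hab)
        measurableSet_closedBall.nullMeasurableSet hfin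
    rw [hd, hball, hcball]
  have hle : volume {x : EuclideanSpace ℝ (Fin 3) | a < ‖x‖ ∧ ‖x‖ < b}
      ≤ volume (Metric.ball (0:EuclideanSpace ℝ (Fin 3)) b \ Metric.closedBall 0 a) :=
    measure_mono hsub
  rw [hdiff] at hle
  have htop : ENNReal.ofReal (b^3) * m - ENNReal.ofReal (a^3) * m ≠ ⊤ := by
    refine (lt_of_le_of_lt (tsub_le_self) ?_).ne
    exact ENNReal.mul_lt_top ENNReal.ofReal_lt_top hmfin.lt_top
  have h1 : (volume {x : EuclideanSpace ℝ (Fin 3) | a < ‖x‖ ∧ ‖x‖ < b}).toReal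
      ≤ (ENNReal.ofReal (b^3) * m - ENNReal.ofReal (a^3) * m).toReal :=
    ENNReal.toReal_mono htop hle
  have h2 : (ENNReal.ofReal (b^3) * m - ENNReal.ofReal (a^3) * m).toReal
      = b^3 * m.toReal - a^3 * m.toReal := by
    rw [ENNReal.toReal_sub_of_le ?hba ?hfin]
    · rw [ENNReal.toReal_mul, ENNReal.toReal_mul, ENNReal.toReal_ofReal (by positivity),
        ENNReal.toReal_ofReal (by positivity)]
    case hba =>
      exact mul_le_mul_left (ENNReal.ofReal_le_ofReal (pow_le_pow_left₀ ha hab.le 3)) m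
    case hfin =>
      exact (ENNReal.mul_lt_top ENNReal.ofReal_lt_top hmfin.lt_top).ne
  rw [h2] at h1
  refine h1.trans ?_
  have hm0 : 0 ≤ m.toReal := ENNReal.toReal_nonneg
  have hkey : b^3 - a^3 ≤ 3*(r₂-r₁)*(|t|+2)^2 := by
    have hba : b - a = r₂ - r₁ := by simp only [hadef, hbdef]; ring
    have hat : a ≤ |t| + 2 := le_trans hab.le hb2
    have ht2 : (0:ℝ) ≤ |t| + 2 := by positivity
    have e1 : a^2 ≤ (|t|+2)^2 := pow_le_pow_left₀ ha hat 2
    have e2 : b^2 ≤ (|t|+2)^2 := pow_le_pow_left₀ hb hb2 2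
    have e3 : a*b ≤ (|t|+2)^2 := by nlinarith
    have e4 : a^2 + a*b + b^2 ≤ 3*(|t|+2)^2 := by linarith
    have e5 : b^3 - a^3 = (b-a)*(a^2+a*b+b^2) := by ring
    rw [e5, hba]
    calc (r₂-r₁)*(a^2+a*b+b^2) ≤ (r₂-r₁)*(3*(|t|+2)^2) :=
          mul_le_mul_of_nonneg_left e4 (by linarith)
      _ = 3*(r₂-r₁)*(|t|+2)^2 := by ring
  calc b^3 * m.toReal - a^3 * m.toReal = m.toReal * (b^3 - a^3) := by ring
    _ ≤ m.toReal * (3*(r₂-r₁)*(|t|+2)^2) := mul_le_mul_of_nonneg_left hkey hm0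

theorem stmt12 :
    ∃ C : ℝ, 0 < C ∧ ∀ (G : ℝ → ℝ) (lam r₁ r₂ : ℝ),
      MemLp G 2 (volume : Measure ℝ) → 2 < lam →
      BddAbove (tauA G lam) → BddAbove (tauB G) →
      0 ≤ r₁ → r₁ < r₂ → r₂ ≤ 2 →
      L1L2 (channel r₁ r₂) (fun x t => (W3 x)^4 * freeWave G x t)
        ≤ C * tau G lam * lam ^ (-(1:ℝ)/2) * (r₂ - r₁) ^ ((1:ℝ)/2) := by
  set m := (volume (Metric.ball (0 : EuclideanSpace ℝ (Fin 3)) 1)).toReal with hmdef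
  have hm0 : 0 ≤ m := ENNReal.toReal_nonneg
  refine ⟨144 * Real.pi * Real.sqrt (3 * m) + 1, by positivity, ?_⟩
  intro G lam r₁ r₂ hG hlam hA hB hr₁ h12 hr₂
  have hlam0 : (0:ℝ) < lam := by linarith
  have hsl0 : 0 < Real.sqrt lam := Real.sqrt_pos.2 hlam0
  set τ := tau G lam with hτdef
  have hτ0 : 0 ≤ τ := add_nonneg (Real.sqrt_nonneg _) (Bnonneg hB)
  set M := 4 * τ / Real.sqrt lam with hMdef
  have hM0 : 0 ≤ M := div_nonneg (by linarith) hsl0.le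
  set D := M * Real.sqrt (3 * m * (r₂ - r₁)) * 36 with hDdef
  have hD0 : 0 ≤ D :=
    mul_nonneg (mul_nonneg hM0 (Real.sqrt_nonneg _)) (by norm_num)
  -- pointwise-in-t bound
  have hF : ∀ t : ℝ,
      (∫ x in {x : EuclideanSpace ℝ (Fin 3) | (x, t) ∈ channel r₁ r₂},
        ((W3 x)^4 * freeWave G x t) ^ 2) ^ ((1:ℝ)/2) ≤ D * (1 + t^2)⁻¹ := by
    intro t
    set S := {x : EuclideanSpace ℝ (Fin 3) | (x, t) ∈ channel r₁ r₂} with hSdef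
    have hSeq : S = {x : EuclideanSpace ℝ (Fin 3) | |t| + r₁ < ‖x‖ ∧ ‖x‖ < |t| + r₂} := rfl
    have hSmeas : MeasurableSet S := by
      rw [hSeq]
      exact ((isOpen_lt continuous_const continuous_norm).inter
        (isOpen_lt continuous_norm continuous_const)).measurableSet
    have hvolfin : volume S < ⊤ := by
      refine lt_of_le_of_lt (measure_mono ?_) (measure_ball_lt_top
        (x := (0 : EuclideanSpace ℝ (Fin 3))) (r := |t| + 2))
      intro x hx
      rw [hSeq] at hx
      exact mem_ball_zero_iff.2 (by cases hx with | intro h1 h2 => linarith)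
    set K := M^2 * ((1/3 + t^2)^4)⁻¹ with hKdef
    have hK0 : 0 ≤ K := by positivity
    have hpt : ∀ x ∈ S, ((W3 x)^4 * freeWave G x t) ^ 2 ≤ K := by
      intro x hx
      rw [hSeq] at hx
      obtain ⟨h1, h2⟩ := hx
      have htx : |t| ≤ ‖x‖ := by linarith [abs_nonneg t]
      have hyx : 1/3 + t^2 ≤ 1/3 + ‖x‖^2 := by
        have : t^2 ≤ ‖x‖^2 := by
          rw [← sq_abs t]
          exact pow_le_pow_left₀ (abs_nonneg t) htx 2
        linarith
      have hyt0 : (0:ℝ) < 1/3 + t^2 := by positivity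
      have hv : |freeWave G x t| ≤ M :=
        vbound hG hlam hA hB hr₁ ⟨h1, h2⟩
      have hv2 : (freeWave G x t)^2 ≤ M^2 := by
        rw [← sq_abs]
        exact pow_le_pow_left₀ (abs_nonneg _) hv 2
      have hy0 : (0:ℝ) < 1/3 + ‖x‖^2 := by positivity
      rw [mul_pow, W3pow]
      have e : (((1/3 + ‖x‖^2)^2)⁻¹)^2 = ((1/3 + ‖x‖^2)^4)⁻¹ := by
        rw [inv_pow, ← pow_mul]
      rw [e]
      have hinv : ((1/3 + ‖x‖^2)^4)⁻¹ ≤ ((1/3 + t^2)^4)⁻¹ := by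
        apply inv_anti₀ (by positivity)
        exact pow_le_pow_left₀ hyt0.le hyx 4
      calc ((1/3 + ‖x‖^2)^4)⁻¹ * (freeWave G x t)^2
          ≤ ((1/3 + t^2)^4)⁻¹ * M^2 :=
            mul_le_mul hinv hv2 (sq_nonneg _) (by positivity)
        _ = K := by rw [hKdef]; ring
    have hinner : ∫ x in S, ((W3 x)^4 * freeWave G x t) ^ 2
        ≤ K * (volume S).toReal := by
      have h1 : ∫ x in S, ((W3 x)^4 * freeWave G x t) ^ 2 ≤ ∫ _x in S, K := by
        refine integral_mono_of_nonneg ?_ ?_ ?_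
        · exact Filter.Eventually.of_forall fun x => sq_nonneg _
        · exact integrableOn_const hvolfin.ne
        · exact ae_restrict_of_forall_mem hSmeas hpt
      rwa [setIntegral_const, smul_eq_mul, mul_comm] at h1
    have hvol : (volume S).toReal ≤ m * (3*(r₂-r₁)*(|t|+2)^2) := by
      rw [hSeq]; exact volBound t r₁ r₂ hr₁ h12 hr₂
    have hchain : ∫ x in S, ((W3 x)^4 * freeWave G x t) ^ 2
        ≤ (M * Real.sqrt (3*m*(r₂-r₁)) * ((|t|+2) * ((1/3+t^2)^2)⁻¹))^2 := by
      have h2 : K * (volume S).toReal ≤ K * (m * (3*(r₂-r₁)*(|t|+2)^2)) :=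
        mul_le_mul_of_nonneg_left hvol hK0
      have h3 : K * (m * (3*(r₂-r₁)*(|t|+2)^2))
          = (M * Real.sqrt (3*m*(r₂-r₁)) * ((|t|+2) * ((1/3+t^2)^2)⁻¹))^2 := by
        have hs : Real.sqrt (3*m*(r₂-r₁)) ^ 2 = 3*m*(r₂-r₁) :=
          Real.sq_sqrt (mul_nonneg (by positivity) (by linarith))
        rw [hKdef]
        rw [mul_pow, mul_pow, hs]
        have hyt0 : (0:ℝ) < 1/3 + t^2 := by positivity
        field_simp
      linarith [hinner]
    -- take square roots
    have hrhs0 : 0 ≤ M * Real.sqrt (3*m*(r₂-r₁)) * ((|t|+2) * ((1/3+t^2)^2)⁻¹) :=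
      mul_nonneg (mul_nonneg hM0 (Real.sqrt_nonneg _)) (by positivity)
    rw [show ((1:ℝ)/2) = 1/(2:ℝ) by norm_num, ← Real.sqrt_eq_rpow]
    have h4 := Real.sqrt_le_sqrt hchain
    rw [Real.sqrt_sq hrhs0] at h4
    refine h4.trans ?_
    -- (|t|+2) * ((1/3+t²)²)⁻¹ ≤ 36 * (1+t²)⁻¹
    have h5 : (|t|+2) * ((1/3+t^2)^2)⁻¹ ≤ 36 * (1+t^2)⁻¹ := by
      have hp1 : (0:ℝ) < (1/3+t^2)^2 := by positivity
      have hp2 : (0:ℝ) < 1+t^2 := by positivity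
      rw [show (36:ℝ) * (1+t^2)⁻¹ = 36/(1+t^2) by ring,
        show (|t|+2) * ((1/3+t^2)^2)⁻¹ = (|t|+2)/((1/3+t^2)^2) by ring,
        div_le_div_iff₀ hp1 hp2]
      nlinarith [abs_nonneg t, sq_abs t, sq_nonneg (t^2 - |t|), sq_nonneg (|t|-1)]
    calc M * Real.sqrt (3*m*(r₂-r₁)) * ((|t|+2) * ((1/3+t^2)^2)⁻¹)
        ≤ M * Real.sqrt (3*m*(r₂-r₁)) * (36 * (1+t^2)⁻¹) :=
          mul_le_mul_of_nonneg_left h5 (mul_nonneg hM0 (Real.sqrt_nonneg _))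
      _ = D * (1+t^2)⁻¹ := by rw [hDdef]; ring
  -- integrate
  have hInt : Integrable (fun t : ℝ => D * (1 + t^2)⁻¹) volume :=
    integrable_inv_one_add_sq.const_mul D
  have hmain : L1L2 (channel r₁ r₂) (fun x t => (W3 x)^4 * freeWave G x t)
      ≤ ∫ t : ℝ, D * (1 + t^2)⁻¹ := by
    rw [L1L2]
    refine integral_mono_of_nonneg ?_ hInt ?_
    · refine Filter.Eventually.of_forall fun t => ?_
      exact Real.rpow_nonneg (integral_nonneg fun x => sq_nonneg _) _
    · exact Filter.Eventually.of_forall fun t => hF t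
  rw [integral_const_mul, integral_univ_inv_one_add_sq] at hmain
  refine hmain.trans ?_
  -- final computation
  have hlamr : lam ^ (-(1:ℝ)/2) = (Real.sqrt lam)⁻¹ := by
    rw [show (-(1:ℝ)/2) = -(1/2 : ℝ) by norm_num, Real.rpow_neg hlam0.le,
      ← Real.sqrt_eq_rpow]
  have hrr : (r₂ - r₁) ^ ((1:ℝ)/2) = Real.sqrt (r₂ - r₁) := by
    rw [show ((1:ℝ)/2) = 1/(2:ℝ) by norm_num, ← Real.sqrt_eq_rpow]
  rw [hlamr, hrr]
  have hsplit : Real.sqrt (3*m*(r₂-r₁)) = Real.sqrt (3*m) * Real.sqrt (r₂-r₁) :=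
    Real.sqrt_mul (by positivity) _
  rw [hDdef, hMdef, hsplit]
  have hπ : 0 < Real.pi := Real.pi_pos
  have hq0 : 0 ≤ τ * (Real.sqrt lam)⁻¹ * Real.sqrt (r₂ - r₁) :=
    mul_nonneg (mul_nonneg hτ0 (by positivity)) (Real.sqrt_nonneg _)
  calc 4 * τ / Real.sqrt lam * (Real.sqrt (3*m) * Real.sqrt (r₂-r₁)) * 36 * Real.pi
      = (144 * Real.pi * Real.sqrt (3*m)) * (τ * (Real.sqrt lam)⁻¹ * Real.sqrt (r₂-r₁)) := by
        ring
    _ ≤ (144 * Real.pi * Real.sqrt (3*m) + 1) * (τ * (Real.sqrt lam)⁻¹ * Real.sqrt (r₂-r₁)) :=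
        mul_le_mul_of_nonneg_right (by linarith) hq0
    _ = (144 * Real.pi * Real.sqrt (3*m) + 1) * τ * (Real.sqrt lam)⁻¹ * Real.sqrt (r₂-r₁) := by
        ring
end
end

section
/- There is an absolute constant C > 0 with the following property. Let G ∈ L²(ℝ), let λ > 0, and suppose τ = (sup_{0<r<λ} (λ/r)·∫_{−r}^{r} |G(s)|² ds)^(1/2) + sup_{r>0} r^(−1/2)·∫_{−r}^{r} |G(s)| ds is finite. Then the associated radial free wave v_L satisfies the pointwise bound |v_L(x,t)| ≤ C · min{λ^(−1/2), |x|^(−1/2)} · τ for every (x,t) with |x| > |t|. -/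
open MeasureTheory Real Set

noncomputable section

lemma rpow_neg_half_eq {y : ℝ} (hy : 0 < y) : y ^ (-(1:ℝ)/2) = (Real.sqrt y)⁻¹ := by
  rw [Real.sqrt_eq_rpow, ← Real.rpow_neg hy.le]
  norm_num

lemma myCS (G : ℝ → ℝ) (hG : MemLp G 2 (volume : Measure ℝ)) {ρ : ℝ} (hρ : 0 < ρ) :
    ∫ s in (-ρ)..ρ, |G s| ≤ Real.sqrt (2*ρ) * Real.sqrt (∫ s in (-ρ)..ρ, (G s)^2) := by
  set μ : Measure ℝ := volume.restrict (Set.Ioc (-ρ) ρ) with hμ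
  have hle : (-ρ) ≤ ρ := by linarith
  have hpq : Real.HolderConjugate 2 2 := ⟨by norm_num, by norm_num, by norm_num⟩
  have hGabs : MemLp (fun s => |G s|) (ENNReal.ofReal 2) μ := by
    have := (hG.restrict (Set.Ioc (-ρ) ρ)).norm
    simpa [Real.norm_eq_abs, show ENNReal.ofReal 2 = 2 by norm_num] using this
  have hone : MemLp (fun _ : ℝ => (1:ℝ)) (ENNReal.ofReal 2) μ := memLp_const 1
  have h := MeasureTheory.integral_mul_le_Lp_mul_Lq_of_nonneg hpq
    (Filter.Eventually.of_forall fun s => abs_nonneg (G s))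
    (Filter.Eventually.of_forall fun _ => zero_le_one) hGabs hone
  simp only [mul_one] at h
  have h1 : ∫ a, |G a| ^ (2:ℝ) ∂μ = ∫ s in (-ρ)..ρ, (G s)^2 := by
    rw [intervalIntegral.integral_of_le hle]
    apply integral_congr_ae
    refine Filter.Eventually.of_forall fun s => ?_
    show |G s| ^ (2:ℝ) = G s ^ 2
    rw [show ((2:ℝ)) = ((2:ℕ):ℝ) by norm_num, Real.rpow_natCast, sq_abs]
  have h2 : ∫ _ : ℝ, (1:ℝ) ^ (2:ℝ) ∂μ = 2*ρ := by
    simp only [Real.one_rpow, integral_const, smul_eq_mul, mul_one]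
    rw [hμ, measureReal_def, Measure.restrict_apply_univ, Real.volume_Ioc, ENNReal.toReal_ofReal (by linarith)]
    ring
  rw [h1, h2] at h
  rw [intervalIntegral.integral_of_le hle]
  calc ∫ s in Set.Ioc (-ρ) ρ, |G s| = ∫ a, |G a| ∂μ := rfl
    _ ≤ (∫ s in (-ρ)..ρ, (G s)^2) ^ ((1:ℝ)/2) * (2*ρ) ^ ((1:ℝ)/2) := h
    _ = Real.sqrt (2*ρ) * Real.sqrt (∫ s in (-ρ)..ρ, (G s)^2) := by
        rw [← Real.sqrt_eq_rpow, ← Real.sqrt_eq_rpow, mul_comm]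

theorem stmt13 :
    ∃ C : ℝ, 0 < C ∧ ∀ (G : ℝ → ℝ) (lam : ℝ),
      MemLp G 2 (volume : Measure ℝ) → 0 < lam →
      BddAbove (tauA G lam) → BddAbove (tauB G) →
      ∀ (x : EuclideanSpace ℝ (Fin 3)) (t : ℝ), |t| < ‖x‖ →
        |freeWave G x t|
          ≤ C * min (lam ^ (-(1:ℝ)/2)) (‖x‖ ^ (-(1:ℝ)/2)) * tau G lam := by
  refine ⟨8, by norm_num, ?_⟩
  intro G lam hG hlam hA hB x t hxt
  simp only [freeWave, tau]
  set r := ‖x‖ with hrdef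
  have hr0 : 0 < r := (abs_nonneg t).trans_lt hxt
  have htr : -r < t ∧ t < r := abs_lt.mp hxt
  -- integrability
  have hGloc : ∀ a b : ℝ, IntegrableOn G (Set.Ioc a b) volume :=
    fun a b => (hG.restrict (Set.Ioc a b)).integrable one_le_two
  have hGint : ∀ a b : ℝ, IntervalIntegrable G volume a b := fun a b => ⟨hGloc a b, hGloc b a⟩
  set A := sSup (tauA G lam) with hAdef
  set B := sSup (tauB G) with hBdef
  -- nonnegativity of A and B
  have hB0 : 0 ≤ B := by
    refine le_trans ?_ (le_csSup hB ⟨1, one_pos, rfl⟩)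
    have : (0:ℝ) ≤ ∫ s in (-(1:ℝ))..(1:ℝ), |G s| :=
      intervalIntegral.integral_nonneg (by norm_num) (fun u _ => abs_nonneg _)
    positivity
  have hA0 : 0 ≤ A := by
    refine le_trans ?_ (le_csSup hA ⟨lam/2, by positivity, by linarith, rfl⟩)
    have : (0:ℝ) ≤ ∫ s in (-(lam/2))..(lam/2), (G s)^2 :=
      intervalIntegral.integral_nonneg (by linarith) (fun u _ => sq_nonneg _)
    positivity
  -- basic pointwise bound
  set I2 := ∫ s in (-(2*r))..(2*r), |G s| with hI2def
  have h0 : |r⁻¹ * ∫ s in (t - r)..(t + r), G s| ≤ r⁻¹ * I2 := by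
    rw [abs_mul, abs_inv, abs_of_nonneg hr0.le]
    refine mul_le_mul_of_nonneg_left ?_ (inv_nonneg.2 hr0.le)
    calc |∫ s in (t - r)..(t + r), G s| ≤ ∫ s in (t - r)..(t + r), |G s| :=
          intervalIntegral.abs_integral_le_integral_abs (by linarith [htr.1, htr.2])
      _ ≤ I2 := intervalIntegral.integral_mono_interval (by linarith [htr.1])
            (by linarith [htr.1, htr.2]) (by linarith [htr.2])
            (Filter.Eventually.of_forall fun s => abs_nonneg _) ((hGint _ _).abs)
  have hminrw : min (lam ^ (-(1:ℝ)/2)) (r ^ (-(1:ℝ)/2))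
      = min (Real.sqrt lam)⁻¹ (Real.sqrt r)⁻¹ := by
    rw [rpow_neg_half_eq hlam, rpow_neg_half_eq hr0]
  rw [hminrw]
  set m := min (Real.sqrt lam)⁻¹ (Real.sqrt r)⁻¹ with hmdef
  have hm0 : 0 ≤ m := le_min (by positivity) (by positivity)
  rcases le_or_gt lam (2*r) with hcase | hcase
  · -- large r : use the B bound
    have hI2B : I2 ≤ B * Real.sqrt (2*r) := by
      have h := le_csSup hB (⟨2*r, by linarith, rfl⟩ : I2 / Real.sqrt (2*r) ∈ tauB G)
      rwa [div_le_iff₀ (Real.sqrt_pos.2 (by linarith))] at h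
    have hb1 : r⁻¹ * I2 ≤ Real.sqrt 2 * (Real.sqrt r)⁻¹ * B := by
      have h' : r⁻¹ * I2 ≤ r⁻¹ * (B * Real.sqrt (2*r)) :=
        mul_le_mul_of_nonneg_left hI2B (by positivity)
      refine h'.trans_eq ?_
      rw [Real.sqrt_mul (by norm_num) r]
      have hrr : Real.sqrt r * Real.sqrt r = r := Real.mul_self_sqrt hr0.le
      have hsr : Real.sqrt r ≠ 0 := ne_of_gt (Real.sqrt_pos.2 hr0)
      field_simp
      linear_combination B * hrr
    have hlamr : Real.sqrt lam ≤ Real.sqrt 2 * Real.sqrt r := by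
      rw [← Real.sqrt_mul (by norm_num)]
      exact Real.sqrt_le_sqrt hcase
    have e1 : (Real.sqrt r)⁻¹ ≤ Real.sqrt 2 * (Real.sqrt lam)⁻¹ := by
      have h2 : (Real.sqrt 2 * Real.sqrt r)⁻¹ ≤ (Real.sqrt lam)⁻¹ :=
        inv_anti₀ (Real.sqrt_pos.2 hlam) hlamr
      calc (Real.sqrt r)⁻¹ = Real.sqrt 2 * (Real.sqrt 2 * Real.sqrt r)⁻¹ := by
            rw [mul_inv, ← mul_assoc, mul_inv_cancel₀ (by positivity), one_mul]
        _ ≤ Real.sqrt 2 * (Real.sqrt lam)⁻¹ :=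
            mul_le_mul_of_nonneg_left h2 (Real.sqrt_nonneg 2)
    have hone2 : (1:ℝ) ≤ Real.sqrt 2 := by
      nlinarith [Real.sq_sqrt (by norm_num : (0:ℝ) ≤ 2), Real.sqrt_nonneg 2]
    have e2 : (Real.sqrt r)⁻¹ ≤ Real.sqrt 2 * (Real.sqrt r)⁻¹ :=
      le_mul_of_one_le_left (by positivity) hone2
    have hkey : (Real.sqrt r)⁻¹ ≤ Real.sqrt 2 * m := by
      rw [hmdef, mul_min_of_nonneg _ _ (Real.sqrt_nonneg 2)]
      exact le_min e1 e2
    have hs2 : Real.sqrt 2 * Real.sqrt 2 = 2 := Real.mul_self_sqrt (by norm_num)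
    calc |r⁻¹ * ∫ s in (t - r)..(t + r), G s| ≤ r⁻¹ * I2 := h0
      _ ≤ Real.sqrt 2 * (Real.sqrt r)⁻¹ * B := hb1
      _ ≤ Real.sqrt 2 * (Real.sqrt 2 * m) * B := by
          exact mul_le_mul_of_nonneg_right
            (mul_le_mul_of_nonneg_left hkey (Real.sqrt_nonneg 2)) hB0
      _ = 2 * m * B := by
          rw [show Real.sqrt 2 * (Real.sqrt 2 * m) = (Real.sqrt 2 * Real.sqrt 2) * m by ring, hs2]
      _ ≤ 8 * m * (Real.sqrt A + B) := by
          nlinarith [mul_nonneg hm0 hB0, mul_nonneg hm0 (Real.sqrt_nonneg A)]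
  · -- small r : use the A bound via Cauchy-Schwarz
    have hρ0 : (0:ℝ) < 2*r := by linarith
    have hCS := myCS G hG hρ0
    have hmemA : (lam/(2*r)) * ∫ s in (-(2*r))..(2*r), (G s)^2 ≤ A :=
      le_csSup hA ⟨2*r, hρ0, hcase, rfl⟩
    set J := ∫ s in (-(2*r))..(2*r), (G s)^2 with hJdef
    have hJ0 : 0 ≤ J :=
      intervalIntegral.integral_nonneg (by linarith) (fun u _ => sq_nonneg _)
    have hJ : J ≤ A * (2*r) / lam := by
      rw [le_div_iff₀ hlam]
      calc J * lam = ((lam/(2*r)) * J) * (2*r) := by field_simp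
        _ ≤ A * (2*r) := mul_le_mul_of_nonneg_right hmemA (by linarith)
    have hc : Real.sqrt (2*(2*r)) * Real.sqrt (A*(2*r)/lam) = Real.sqrt (8*A/lam) * r := by
      rw [← Real.sqrt_mul (by linarith : (0:ℝ) ≤ 2*(2*r)),
        show (2*(2*r))*(A*(2*r)/lam) = (8*A/lam) * r^2 by ring,
        Real.sqrt_mul (div_nonneg (by linarith) hlam.le), Real.sqrt_sq hr0.le]
    have hI2A : I2 ≤ Real.sqrt (8*A/lam) * r := by
      calc I2 ≤ Real.sqrt (2*(2*r)) * Real.sqrt J := hCS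
        _ ≤ Real.sqrt (2*(2*r)) * Real.sqrt (A*(2*r)/lam) :=
            mul_le_mul_of_nonneg_left (Real.sqrt_le_sqrt hJ) (Real.sqrt_nonneg _)
        _ = Real.sqrt (8*A/lam) * r := hc
    have hv2 : r⁻¹ * I2 ≤ Real.sqrt (8*A/lam) := by
      have := mul_le_mul_of_nonneg_left hI2A (inv_nonneg.2 hr0.le)
      calc r⁻¹ * I2 ≤ r⁻¹ * (Real.sqrt (8*A/lam) * r) := this
        _ = Real.sqrt (8*A/lam) := by field_simp
    have hsplit : Real.sqrt (8*A/lam) = Real.sqrt 8 * (Real.sqrt A * (Real.sqrt lam)⁻¹) := by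
      rw [show 8*A/lam = 8 * (A/lam) by ring, Real.sqrt_mul (by norm_num) (A/lam),
        Real.sqrt_div hA0, div_eq_mul_inv]
    have h8 : Real.sqrt 8 ≤ 3 := by
      nlinarith [Real.sq_sqrt (by norm_num : (0:ℝ) ≤ 8), Real.sqrt_nonneg 8]
    have hmeq : m = (Real.sqrt lam)⁻¹ :=
      min_eq_left (inv_anti₀ (Real.sqrt_pos.2 hr0) (Real.sqrt_le_sqrt (by linarith)))
    calc |r⁻¹ * ∫ s in (t - r)..(t + r), G s| ≤ r⁻¹ * I2 := h0
      _ ≤ Real.sqrt (8*A/lam) := hv2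
      _ = Real.sqrt 8 * (Real.sqrt A * m) := by rw [hsplit, hmeq]
      _ ≤ 3 * (Real.sqrt A * m) := by
          exact mul_le_mul_of_nonneg_right h8 (mul_nonneg (Real.sqrt_nonneg A) hm0)
      _ ≤ 8 * m * (Real.sqrt A + B) := by
          nlinarith [mul_nonneg hm0 hB0, mul_nonneg hm0 (Real.sqrt_nonneg A)]
end
end

section
/- Let G : ℝ → ℝ be continuous with ∫_ℝ G(s)² ds < ∞, and define u₀(r) = r^(−1) ∫_{−r}^{r} G(s) ds and u₁(r) = (G(r) − G(−r))/r for r > 0. Then for every R > 0 one has the exterior energy identity ∫_R^∞ ( u₀′(r)² + u₁(r)² ) r² dr = 2 ∫_{{s : |s| > R}} G(s)² ds + R · u₀(R)², where u₀′ denotes the derivative of u₀. -/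
open MeasureTheory Real Set

noncomputable section

open Filter intervalIntegral


lemma cs_aux' (G : ℝ → ℝ) (hG : Continuous G) {a b : ℝ} (hab : a ≤ b) :
    (∫ s in a..b, |G s|)^2 ≤ (b - a) * ∫ s in a..b, (G s)^2 := by
  rcases eq_or_lt_of_le hab with h | h
  · subst h; simp
  set I1 := ∫ s in a..b, |G s| with hI1
  set I2 := ∫ s in a..b, (G s)^2 with hI2
  set t := I1 / (b - a) with ht
  have hlen : 0 < b - a := by linarith
  have hint2 : IntervalIntegrable (fun s => (G s)^2) volume a b := (hG.pow 2).intervalIntegrable a b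
  have hintabs : IntervalIntegrable (fun s => 2 * t * |G s|) volume a b :=
    (continuous_const.mul hG.abs).intervalIntegrable a b
  have key : (0:ℝ) ≤ ∫ s in a..b, (|G s| - t)^2 :=
    intervalIntegral.integral_nonneg hab (fun x _ => sq_nonneg _)
  have expand : (∫ s in a..b, (|G s| - t)^2)
      = I2 - 2 * t * I1 + t^2 * (b - a) := by
    have heq : (fun s => (|G s| - t)^2) = fun s => ((G s)^2 - 2 * t * |G s|) + t^2 := by
      funext s; rw [sub_sq, sq_abs]; ring
    rw [heq, intervalIntegral.integral_add (hint2.sub hintabs) intervalIntegrable_const,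
      intervalIntegral.integral_sub hint2 hintabs, intervalIntegral.integral_const,
      intervalIntegral.integral_const_mul]
    simp only [smul_eq_mul]; ring
  rw [expand, ht] at key
  have hne : b - a ≠ 0 := ne_of_gt hlen
  have e : I2 - 2 * (I1/(b-a)) * I1 + (I1/(b-a))^2 * (b-a) = (I2*(b-a) - I1^2)/(b-a) := by
    field_simp; ring
  rw [e] at key
  have hnum : 0 ≤ I2 * (b-a) - I1^2 := by
    rcases div_nonneg_iff.mp key with ⟨h1,_⟩ | ⟨_,h2⟩
    · exact h1
    · nlinarith
  nlinarith


lemma lim_aux (G : ℝ → ℝ) (hG : Continuous G) (hG2 : Integrable (fun s => (G s)^2)) :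
    Filter.Tendsto (fun r => (∫ s in (-r)..r, G s)^2 / r) atTop (nhds 0) := by
  set L := ∫ s, (G s)^2 with hLdef
  have hG2c : Continuous fun s => (G s)^2 := hG.pow 2
  have hintle : ∀ u v : ℝ, u ≤ v → (∫ s in u..v, (G s)^2) ≤ L := by
    intro u v huv
    rw [intervalIntegral.integral_of_le huv]
    exact setIntegral_le_integral hG2 (Filter.Eventually.of_forall fun s => sq_nonneg _)
  have hT : Tendsto (fun M : ℝ => L - ∫ s in (-M)..M, (G s)^2) atTop (nhds 0) := by
    have h := intervalIntegral_tendsto_integral hG2 tendsto_neg_atTop_atBot tendsto_id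
    have h2 := (tendsto_const_nhds (x := L)).sub h
    simpa [← hLdef] using h2
  have hsqrt : Tendsto Real.sqrt atTop atTop := by
    apply tendsto_atTop_atTop.2
    intro b
    refine ⟨(max b 0)^2, fun x hx => (le_max_left b 0).trans ?_⟩
    rw [← Real.sqrt_sq (le_max_right b 0)]
    exact Real.sqrt_le_sqrt hx
  have hbound : ∀ r : ℝ, 1 ≤ r →
      (∫ s in (-r)..r, G s)^2 / r
        ≤ 4*L/Real.sqrt r + 8*(L - ∫ z in (-(Real.sqrt r))..(Real.sqrt r), (G z)^2) := by
    intro r hr1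
    have hr0 : (0:ℝ) < r := by linarith
    set s := Real.sqrt r with hsdef
    have hs1 : 1 ≤ s := by
      rw [hsdef, show (1:ℝ) = Real.sqrt 1 by simp]
      exact Real.sqrt_le_sqrt hr1
    have hs0 : (0:ℝ) < s := by linarith
    have hss : s * s = r := Real.mul_self_sqrt hr0.le
    have hsr : s ≤ r := by nlinarith
    have hii : ∀ u v : ℝ, IntervalIntegrable (fun z => |G z|) volume u v :=
      fun u v => hG.abs.intervalIntegrable u v
    -- split the absolute integrals
    set a := ∫ z in (-r)..(-s), |G z| with hadef
    set b := ∫ z in (-s)..s, |G z| with hbdef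
    set c := ∫ z in s..r, |G z| with hcdef
    set Ta := ∫ z in (-r)..(-s), (G z)^2 with hTadef
    set mid := ∫ z in (-s)..s, (G z)^2 with hmiddef
    set Tc := ∫ z in s..r, (G z)^2 with hTcdef
    have hsplit : (∫ z in (-r)..r, |G z|) = a + b + c := by
      rw [hadef, hbdef, hcdef,
        intervalIntegral.integral_add_adjacent_intervals (hii (-r) (-s)) (hii (-s) s),
        intervalIntegral.integral_add_adjacent_intervals (hii (-r) s) (hii s r)]
    have hF : |∫ z in (-r)..r, G z| ≤ a + b + c := by
      rw [← hsplit]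
      exact intervalIntegral.abs_integral_le_integral_abs (by linarith)
    have hF2 : (∫ z in (-r)..r, G z)^2 ≤ (a + b + c)^2 := by
      rw [← sq_abs]
      apply pow_le_pow_left₀ (abs_nonneg _) hF
    have ha0 : 0 ≤ a := intervalIntegral.integral_nonneg (by linarith) (fun x _ => abs_nonneg _)
    have hb0 : 0 ≤ b := intervalIntegral.integral_nonneg (by linarith) (fun x _ => abs_nonneg _)
    have hc0 : 0 ≤ c := intervalIntegral.integral_nonneg (by linarith) (fun x _ => abs_nonneg _)
    have hTa0 : 0 ≤ Ta := intervalIntegral.integral_nonneg (by linarith) (fun x _ => sq_nonneg _)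
    have hmid0 : 0 ≤ mid := intervalIntegral.integral_nonneg (by linarith) (fun x _ => sq_nonneg _)
    have hTc0 : 0 ≤ Tc := intervalIntegral.integral_nonneg (by linarith) (fun x _ => sq_nonneg _)
    have ha2 : a^2 ≤ (r - s) * Ta := by
      have := cs_aux' G hG (show -r ≤ -s by linarith)
      simpa [hadef, hTadef] using this.trans_eq (by ring)
    have hb2 : b^2 ≤ (2*s) * mid := by
      have := cs_aux' G hG (show -s ≤ s by linarith)
      simpa [hbdef, hmiddef] using this.trans_eq (by ring)
    have hc2 : c^2 ≤ (r - s) * Tc := cs_aux' G hG (by linarith)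
    have hsum : Ta + mid + Tc ≤ L := by
      have heq : Ta + mid + Tc = ∫ z in (-r)..r, (G z)^2 := by
        rw [hTadef, hmiddef, hTcdef,
          intervalIntegral.integral_add_adjacent_intervals (hG2c.intervalIntegrable (-r) (-s))
            (hG2c.intervalIntegrable (-s) s),
          intervalIntegral.integral_add_adjacent_intervals (hG2c.intervalIntegrable (-r) s)
            (hG2c.intervalIntegrable s r)]
      rw [heq]; exact hintle _ _ (by linarith)
    have hmidL : mid ≤ L := by linarith
    have key : (∫ z in (-r)..r, G z)^2 ≤ 4*L*s + 8*(L - mid)*r := by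
      nlinarith [sq_nonneg (a - b + c), sq_nonneg (a - c),
        mul_nonneg hTa0 hs0.le, mul_nonneg hTc0 hs0.le,
        mul_le_mul_of_nonneg_left (show Ta + Tc ≤ L - mid by linarith) hr0.le,
        mul_le_mul_of_nonneg_left hmidL hs0.le,
        mul_nonneg (sub_nonneg.2 hmidL) hr0.le]
    calc (∫ z in (-r)..r, G z)^2 / r ≤ (4*L*s + 8*(L - mid)*r) / r := by
            gcongr
      _ = 4*L/s + 8*(L - mid) := by
            rw [← hss]
            have hsne : s ≠ 0 := ne_of_gt hs0
            field_simp
  -- squeeze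
  have hub : Tendsto (fun r => 4*L/Real.sqrt r + 8*(L - ∫ z in (-(Real.sqrt r))..(Real.sqrt r), (G z)^2)) atTop (nhds 0) := by
    have h1 : Tendsto (fun r : ℝ => 4*L/Real.sqrt r) atTop (nhds 0) :=
      Tendsto.div_atTop tendsto_const_nhds hsqrt
    have h2 := (hT.comp hsqrt).const_mul (8:ℝ)
    simpa using h1.add h2
  have hlb : ∀ r : ℝ, 1 ≤ r → 0 ≤ (∫ s in (-r)..r, G s)^2 / r := by
    intro r hr; positivity
  refine tendsto_of_tendsto_of_tendsto_of_le_of_le' tendsto_const_nhds hub ?_ ?_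
  · filter_upwards [eventually_ge_atTop (1:ℝ)] with r hr using hlb r hr
  · filter_upwards [eventually_ge_atTop (1:ℝ)] with r hr using hbound r hr


theorem stmt15 (G : ℝ → ℝ) (hG : Continuous G)
    (hG2 : Integrable (fun s => (G s)^2)) (R : ℝ) (hR : 0 < R) :
    (∫ r in Set.Ioi R,
        ((deriv (fun ρ : ℝ => (∫ s in (-ρ)..ρ, G s) / ρ) r)^2 + ((G r - G (-r)) / r)^2) * r^2)
      = 2 * (∫ s in {s : ℝ | R < |s|}, (G s)^2)
        + R * ((∫ s in (-R)..R, G s) / R)^2 := by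
  set L := ∫ s, (G s)^2 with hLdef
  have hG2c : Continuous fun s => (G s)^2 := hG.pow 2
  -- the antiderivatives
  set A : ℝ → ℝ := fun x => ∫ t in (0:ℝ)..x, G t with hAdef
  set B : ℝ → ℝ := fun x => ∫ t in (0:ℝ)..x, (G t)^2 with hBdef
  have hA : ∀ x : ℝ, HasDerivAt A (G x) x := fun x =>
    intervalIntegral.integral_hasDerivAt_right (hG.intervalIntegrable 0 x)
      (hG.stronglyMeasurableAtFilter _ _) hG.continuousAt
  have hB : ∀ x : ℝ, HasDerivAt B ((G x)^2) x := fun x =>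
    intervalIntegral.integral_hasDerivAt_right (hG2c.intervalIntegrable 0 x)
      (hG2c.stronglyMeasurableAtFilter _ _) hG2c.continuousAt
  have hFeq : ∀ r : ℝ, (∫ s in (-r)..r, G s) = A r - A (-r) := fun r =>
    (intervalIntegral.integral_interval_sub_left (hG.intervalIntegrable 0 r)
      (hG.intervalIntegrable 0 (-r))).symm
  have hHeq : ∀ r : ℝ, (∫ s in (-r)..r, (G s)^2) = B r - B (-r) := fun r =>
    (intervalIntegral.integral_interval_sub_left (hG2c.intervalIntegrable 0 r)
      (hG2c.intervalIntegrable 0 (-r))).symm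
  have hF : ∀ r : ℝ, HasDerivAt (fun ρ => A ρ - A (-ρ)) (G r + G (-r)) r := by
    intro r
    have h2 : HasDerivAt (fun ρ : ℝ => A (-ρ)) (G (-r) * (-1)) r :=
      (hA (-r)).comp r (hasDerivAt_neg r)
    have := (hA r).sub h2
    exact this.congr_deriv (by ring)
  have hH : ∀ r : ℝ, HasDerivAt (fun ρ => B ρ - B (-ρ)) ((G r)^2 + (G (-r))^2) r := by
    intro r
    have h2 : HasDerivAt (fun ρ : ℝ => B (-ρ)) ((G (-r))^2 * (-1)) r :=
      (hB (-r)).comp r (hasDerivAt_neg r)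
    have := (hB r).sub h2
    exact this.congr_deriv (by ring)
  -- the function Φ
  set Φ : ℝ → ℝ := fun r => 2 * (B r - B (-r)) - (A r - A (-r))^2 / r with hΦdef
  -- derivative of u₀
  have hu : ∀ r : ℝ, 0 < r →
      deriv (fun ρ : ℝ => (∫ s in (-ρ)..ρ, G s) / ρ) r
        = ((G r + G (-r)) * r - (A r - A (-r))) / r^2 := by
    intro r hr
    have hfun : (fun ρ : ℝ => (∫ s in (-ρ)..ρ, G s) / ρ) = fun ρ => (A ρ - A (-ρ)) / ρ := by
      funext ρ; rw [hFeq]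
    rw [hfun]
    have h := (hF r).div (hasDerivAt_id r) (ne_of_gt hr)
    have := h.deriv
    simp only [id_eq, mul_one] at this
    exact this
  have hΦderiv : ∀ r : ℝ, 0 < r → HasDerivAt Φ
      (((deriv (fun ρ : ℝ => (∫ s in (-ρ)..ρ, G s) / ρ) r)^2 + ((G r - G (-r)) / r)^2) * r^2) r := by
    intro r hr
    have h1 := (hH r).const_mul (2:ℝ)
    have h2 := ((hF r).pow 2).div (hasDerivAt_id r) (ne_of_gt hr)
    have h := h1.sub h2
    refine h.congr_deriv ?_
    rw [hu r hr]
    have hrne : r ≠ 0 := ne_of_gt hr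
    simp only [id_eq, Pi.pow_apply]
    field_simp
    ring
  -- nonnegativity
  have hnonneg : ∀ x ∈ Ioi R, 0 ≤
      ((deriv (fun ρ : ℝ => (∫ s in (-ρ)..ρ, G s) / ρ) x)^2 + ((G x - G (-x)) / x)^2) * x^2 := by
    intro x _; positivity
  -- limit of Φ at infinity
  have hΦlim : Tendsto Φ atTop (nhds (2 * L)) := by
    have h1 : Tendsto (fun r : ℝ => 2 * (B r - B (-r))) atTop (nhds (2 * L)) := by
      have h := intervalIntegral_tendsto_integral hG2 tendsto_neg_atTop_atBot tendsto_id
      have h' : Tendsto (fun r : ℝ => B r - B (-r)) atTop (nhds L) := by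
        refine h.congr fun r => ?_
        exact hHeq r
      exact h'.const_mul 2
    have h2 : Tendsto (fun r : ℝ => (A r - A (-r))^2 / r) atTop (nhds 0) := by
      have := lim_aux G hG hG2
      refine this.congr fun r => ?_
      rw [hFeq]
    simpa using h1.sub h2
  -- continuity at R
  have hΦcont : ContinuousWithinAt Φ (Ici R) R :=
    (hΦderiv R hR).continuousAt.continuousWithinAt
  have main := integral_Ioi_of_hasDerivAt_of_nonneg hΦcont
    (fun x hx => hΦderiv x (hR.trans hx)) hnonneg hΦlim
  rw [main]
  -- compute the RHS set integral
  have hset : {s : ℝ | R < |s|} = (Icc (-R) R)ᶜ := by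
    ext s
    simp [mem_Icc, ← abs_le, not_le]
  have hcompl : (∫ s in {s : ℝ | R < |s|}, (G s)^2) = L - ∫ s in (-R)..R, (G s)^2 := by
    rw [hset]
    have := integral_add_compl (measurableSet_Icc : MeasurableSet (Icc (-R) R)) hG2
    have hIcc : (∫ s in Icc (-R) R, (G s)^2) = ∫ s in (-R)..R, (G s)^2 := by
      rw [intervalIntegral.integral_of_le (by linarith : -R ≤ R), integral_Icc_eq_integral_Ioc]
    linarith
  rw [hcompl, hHeq R, hFeq R]
  have hrne : R ≠ 0 := ne_of_gt hR
  have hx : R * ((A R - A (-R)) / R)^2 = (A R - A (-R))^2 / R := by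
    field_simp
  rw [hx, hΦdef]
  ring
end
end
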